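/- (Generalised Graded Uniqueness Theorem) Let G be an ample Hausdorff groupoid, R a unital commutative ring, Γ a discrete group with identity ε, and (Σ, G, Γ) a Γ-graded discrete R-twist such that {u ∈ Σ_ε⁽⁰⁾ : (Σ_ε)ᵤᵘ ⊆ Iso(Σ_ε)°} is dense in Σ⁽⁰⁾. If Q is a Γ-graded ring and π : A_R(G; Σ) → Q is a graded ring homomorphism, then π is injective if and only if π(ι_ε(ι(f))) ≠ 0 for every nonzero f ∈ A_R(Iso(G_ε)°; Iso(Σ_ε)°), where ι : A_R(Iso(G_ε)°; Iso(Σ_ε)°) → A_R(G_ε; Σ_ε) and ι_ε : A_R(G_ε; Σ_ε) → A_R(G; Σ) are the natural inclusions. -/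

import Mathlib

open Set Function TopologicalSpace Classical
noncomputable section

universe u v w

/-- An étale topological groupoid, encoded with total operations:
`mul a b` is only meaningful when `src a = rng b`. -/
structure EtaleGroupoid (G : Type u) [TopologicalSpace G] where
  mul : G → G → G
  inv : G → G
  src : G → G
  rng : G → G
  rng_mul_self : ∀ g, mul (rng g) g = g
  mul_src_self : ∀ g, mul g (src g) = g
  src_inv : ∀ g, src (inv g) = rng g
  rng_inv : ∀ g, rng (inv g) = src g
  inv_inv : ∀ g, inv (inv g) = g
  inv_mul_self : ∀ g, mul (inv g) g = src g
  mul_inv_self : ∀ g, mul g (inv g) = rng g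
  mul_assoc' : ∀ a b c, src a = rng b → src b = rng c →
    mul (mul a b) c = mul a (mul b c)
  src_mul : ∀ a b, src a = rng b → src (mul a b) = src b
  rng_mul : ∀ a b, src a = rng b → rng (mul a b) = rng a
  continuous_inv : Continuous inv
  continuousOn_mul :
    ContinuousOn (fun p : G × G => mul p.1 p.2) {p : G × G | src p.1 = rng p.2}
  isLocalHomeomorph_src : IsLocalHomeomorph src

namespace EtaleGroupoid

variable {G : Type u} [TopologicalSpace G] (𝒢 : EtaleGroupoid G)

/-- The unit space `G⁽⁰⁾`. -/
def unitSpace : Set G := Set.range 𝒢.src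

/-- The isotropy bundle `Iso(G) = {γ : r γ = s γ}`. -/
def iso : Set G := {g | 𝒢.rng g = 𝒢.src g}

/-- The isotropy group `Gᵤᵘ` at a unit `u`. -/
def isoAt (u : G) : Set G := {g | 𝒢.rng g = u ∧ 𝒢.src g = u}

/-- `U` is a bisection: `src` and `rng` are injective on `U`. -/
def IsBisection (U : Set G) : Prop := Set.InjOn 𝒢.src U ∧ Set.InjOn 𝒢.rng U

/-- `U` is a compact open bisection. -/
def IsCOB (U : Set G) : Prop := IsCompact U ∧ IsOpen U ∧ 𝒢.IsBisection U

/-- Pointwise inverse of a set. -/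
def setInv (U : Set G) : Set G := 𝒢.inv '' U

/-- Pointwise product of two sets (only composable products). -/
def setMul (U V : Set G) : Set G :=
  {g | ∃ a ∈ U, ∃ b ∈ V, 𝒢.src a = 𝒢.rng b ∧ g = 𝒢.mul a b}

/-- `H` is a subgroupoid of `G`. -/
def IsSubgroupoid (H : Set G) : Prop :=
  (∀ a ∈ H, 𝒢.inv a ∈ H) ∧
  (∀ a ∈ H, ∀ b ∈ H, 𝒢.src a = 𝒢.rng b → 𝒢.mul a b ∈ H) ∧
  (∀ a ∈ H, 𝒢.src a ∈ H)

/-- The groupoid is effective: the interior of the isotropy is the unit space. -/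
def Effective : Prop := interior 𝒢.iso = 𝒢.unitSpace

/-- A continuous (i.e. locally constant) `Rˣ`-valued 2-cocycle on `G`. -/
def IsCocycle {R : Type w} [CommRing R] (c : G → G → Rˣ) : Prop :=
  IsLocallyConstant (fun p : {p : G × G // 𝒢.src p.1 = 𝒢.rng p.2} => c p.1.1 p.1.2) ∧
  (∀ a b d, 𝒢.src a = 𝒢.rng b → 𝒢.src b = 𝒢.rng d →
    c a b * c (𝒢.mul a b) d = c b d * c a (𝒢.mul b d)) ∧
  (∀ g, c (𝒢.rng g) g = 1 ∧ c g (𝒢.src g) = 1)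

/-- Membership in the (cocycle-twisted) Steinberg algebra `A_R(G)`:
locally constant, compactly supported functions `G → R`. -/
def MemSt {R : Type w} [CommRing R] (f : G → R) : Prop :=
  IsLocallyConstant f ∧ ∃ K : Set G, IsCompact K ∧ Function.support f ⊆ K

/-- Convolution on `A_R(G;σ)` twisted by a 2-cocycle `c`. -/
noncomputable def convC {R : Type w} [CommRing R] (c : G → G → Rˣ) (f g : G → R) :
    G → R := fun γ =>
  ∑ᶠ p : G × G,
    if 𝒢.src p.1 = 𝒢.rng p.2 ∧ 𝒢.mul p.1 p.2 = γ then
      (c p.1 p.2 : R) * f p.1 * g p.2 else 0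

/-- A continuous `Γ`-grading on `G` (for a discrete group `Γ`). -/
def IsGrading {Γ : Type*} [Group Γ] (c : G → Γ) : Prop :=
  IsLocallyConstant c ∧ ∀ a b, 𝒢.src a = 𝒢.rng b → c (𝒢.mul a b) = c a * c b

end EtaleGroupoid

/-- An ample groupoid: étale with a basis of compact open bisections. -/
structure AmpleGroupoid (G : Type u) [TopologicalSpace G] extends EtaleGroupoid G where
  ample : TopologicalSpace.IsTopologicalBasis {U : Set G | toEtaleGroupoid.IsCOB U}

/-- A discrete twist `G⁽⁰⁾ × Rˣ → Σ → G` over an ample groupoid `G`. -/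
structure DiscreteTwist (R : Type w) [CommRing R] {G : Type u} {S : Type v}
    [TopologicalSpace G] [TopologicalSpace S]
    (𝒢 : AmpleGroupoid G) (𝒮 : EtaleGroupoid S) where
  i : G → Rˣ → S
  q : S → G
  continuousOn_i : ∀ t : Rˣ, ContinuousOn (fun x => i x t) 𝒢.unitSpace
  continuous_q : Continuous q
  i_injOn : Set.InjOn (fun p : G × Rˣ => i p.1 p.2) (𝒢.unitSpace ×ˢ (Set.univ : Set Rˣ))
  q_surj : Function.Surjective q
  exact' : ∀ x ∈ 𝒢.unitSpace, q ⁻¹' {x} = {σ | ∃ t : Rˣ, σ = i x t}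
  i_mul : ∀ x ∈ 𝒢.unitSpace, ∀ s t : Rˣ, 𝒮.mul (i x s) (i x t) = i x (s * t)
  unit_eq : 𝒮.unitSpace = (fun x => i x 1) '' 𝒢.unitSpace
  q_mul : ∀ a b, 𝒮.src a = 𝒮.rng b → q (𝒮.mul a b) = 𝒢.mul (q a) (q b)
  q_inv : ∀ a, q (𝒮.inv a) = 𝒢.inv (q a)
  q_src : ∀ a, q (𝒮.src a) = 𝒢.src (q a)
  q_rng : ∀ a, q (𝒮.rng a) = 𝒢.rng (q a)
  q_unit_bij : Set.BijOn q 𝒮.unitSpace 𝒢.unitSpace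
  central : ∀ (σ : S) (t : Rˣ),
    𝒮.mul (i (𝒢.rng (q σ)) t) σ = 𝒮.mul σ (i (𝒢.src (q σ)) t)
  loc_triv : ∀ α : G, ∃ B : Set G, IsOpen B ∧ α ∈ B ∧ 𝒢.IsBisection B ∧
    ∃ P : G → S, ContinuousOn P B ∧ (∀ β ∈ B, q (P β) = β) ∧
      (∀ t : Rˣ, ContinuousOn (fun β => 𝒮.mul (i (𝒢.rng β) t) (P β)) B) ∧
      (∀ σ : S, q σ ∈ B →
        ∃! p : G × Rˣ, p.1 ∈ B ∧ 𝒮.mul (i (𝒢.rng p.1) p.2) (P p.1) = σ) ∧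
      (∀ t : Rˣ, ∀ V ⊆ B, IsOpen V →
        IsOpen ((fun β => 𝒮.mul (i (𝒢.rng β) t) (P β)) '' V))

namespace DiscreteTwist

variable {R : Type w} [CommRing R] {G : Type u} {S : Type v}
  [TopologicalSpace G] [TopologicalSpace S]
  {𝒢 : AmpleGroupoid G} {𝒮 : EtaleGroupoid S} (T : DiscreteTwist R 𝒢 𝒮)

/-- The action of `Rˣ` on `Σ`: `t • σ = i(r σ, t) σ`. -/
def act (t : Rˣ) (σ : S) : S := 𝒮.mul (T.i (𝒢.rng (T.q σ)) t) σ

/-- The function `1̃_X` associated to a subset `X ⊆ Σ`. -/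
noncomputable def tilde (X : Set S) : S → R := fun σ =>
  if h : ∃ t : Rˣ, σ ∈ T.act t '' X then (((Classical.choose h)⁻¹ : Rˣ) : R) else 0

/-- Membership in the twisted Steinberg algebra `A_R(G;Σ)`: locally constant,
`Rˣ`-contravariant functions with compact image of the support in `G`. -/
def MemA (f : S → R) : Prop :=
  IsLocallyConstant f ∧
  (∀ (t : Rˣ) (σ : S), f (T.act t σ) = ((t⁻¹ : Rˣ) : R) * f σ) ∧
  IsCompact (T.q '' Function.support f)

/-- A (not necessarily continuous) section of `q`. -/
noncomputable def sec : G → S := Function.surjInv T.q_surj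

/-- Convolution on `A_R(G;Σ)`, defined via the section `sec`. -/
noncomputable def conv (f g : S → R) : S → R := fun σ =>
  ∑ᶠ α : G,
    if 𝒢.rng α = 𝒢.rng (T.q σ) then
      f (T.sec α) * g (𝒮.mul (𝒮.inv (T.sec α)) σ) else 0

end DiscreteTwist

end
noncomputable section
namespace EtaleGroupoid

variable {G : Type u} [TopologicalSpace G] (𝒢 : EtaleGroupoid G)

lemma src_src (g : G) : 𝒢.src (𝒢.src g) = 𝒢.src g := by
  conv_lhs => rw [← 𝒢.inv_mul_self g]
  rw [𝒢.src_mul _ _ (𝒢.src_inv g)]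

lemma rng_src (g : G) : 𝒢.rng (𝒢.src g) = 𝒢.src g := by
  conv_lhs => rw [← 𝒢.inv_mul_self g]
  rw [𝒢.rng_mul _ _ (𝒢.src_inv g), 𝒢.rng_inv]

lemma src_rng (g : G) : 𝒢.src (𝒢.rng g) = 𝒢.rng g := by
  conv_lhs => rw [← 𝒢.mul_inv_self g]
  rw [𝒢.src_mul _ _ (𝒢.rng_inv g).symm, 𝒢.src_inv]

lemma rng_rng (g : G) : 𝒢.rng (𝒢.rng g) = 𝒢.rng g := by
  conv_lhs => rw [← 𝒢.mul_inv_self g]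
  rw [𝒢.rng_mul _ _ (𝒢.rng_inv g).symm]

lemma mem_unitSpace_iff {x : G} : x ∈ 𝒢.unitSpace ↔ 𝒢.src x = x :=
  ⟨fun ⟨g, hg⟩ => hg ▸ 𝒢.src_src g, fun h => ⟨x, h⟩⟩

lemma src_mem_unitSpace (g : G) : 𝒢.src g ∈ 𝒢.unitSpace := ⟨g, rfl⟩

lemma rng_mem_unitSpace (g : G) : 𝒢.rng g ∈ 𝒢.unitSpace :=
  ⟨𝒢.inv g, 𝒢.src_inv g⟩

lemma src_unit {x : G} (hx : x ∈ 𝒢.unitSpace) : 𝒢.src x = x :=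
  (𝒢.mem_unitSpace_iff).1 hx

lemma rng_unit {x : G} (hx : x ∈ 𝒢.unitSpace) : 𝒢.rng x = x := by
  obtain ⟨g, rfl⟩ := hx; exact 𝒢.rng_src g

lemma inv_unit {x : G} (hx : x ∈ 𝒢.unitSpace) : 𝒢.inv x = x := by
  calc 𝒢.inv x = 𝒢.mul (𝒢.inv x) (𝒢.src (𝒢.inv x)) := (𝒢.mul_src_self _).symm
    _ = 𝒢.mul (𝒢.inv x) x := by rw [𝒢.src_inv, 𝒢.rng_unit hx]
    _ = 𝒢.src x := 𝒢.inv_mul_self x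
    _ = x := 𝒢.src_unit hx

lemma continuous_src : Continuous 𝒢.src := 𝒢.isLocalHomeomorph_src.continuous

lemma rng_eq_src_inv : 𝒢.rng = 𝒢.src ∘ 𝒢.inv := funext fun g => (𝒢.src_inv g).symm

lemma continuous_rng : Continuous 𝒢.rng := by
  rw [𝒢.rng_eq_src_inv]; exact 𝒢.continuous_src.comp 𝒢.continuous_inv

lemma image_inv_eq_preimage (U : Set G) : 𝒢.inv '' U = 𝒢.inv ⁻¹' U := by
  ext σ
  exact ⟨fun ⟨a, ha, h⟩ => by simpa [← h, 𝒢.inv_inv] using ha,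
    fun h => ⟨𝒢.inv σ, h, 𝒢.inv_inv σ⟩⟩

lemma isOpenMap_inv : IsOpenMap 𝒢.inv := fun U hU => by
  rw [𝒢.image_inv_eq_preimage]; exact hU.preimage 𝒢.continuous_inv

lemma isOpenMap_src : IsOpenMap 𝒢.src := 𝒢.isLocalHomeomorph_src.isOpenMap

lemma isOpenMap_rng : IsOpenMap 𝒢.rng := by
  rw [𝒢.rng_eq_src_inv]; exact 𝒢.isOpenMap_src.comp 𝒢.isOpenMap_inv

lemma isOpen_unitSpace : IsOpen 𝒢.unitSpace := 𝒢.isOpenMap_src.isOpen_range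

lemma isClosed_unitSpace [T2Space G] : IsClosed 𝒢.unitSpace := by
  have : 𝒢.unitSpace = {x | 𝒢.src x = x} := Set.ext fun x => 𝒢.mem_unitSpace_iff
  rw [this]; exact isClosed_eq 𝒢.continuous_src continuous_id

lemma inv_mul_rev {a b : G} (h : 𝒢.src a = 𝒢.rng b) :
    𝒢.inv (𝒢.mul a b) = 𝒢.mul (𝒢.inv b) (𝒢.inv a) := by
  set c := 𝒢.mul (𝒢.inv b) (𝒢.inv a) with hc
  have comp_c : 𝒢.src (𝒢.inv b) = 𝒢.rng (𝒢.inv a) := by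
    rw [𝒢.src_inv, 𝒢.rng_inv, h]
  have hbc : 𝒢.mul b c = 𝒢.inv a := by
    rw [hc, ← 𝒢.mul_assoc' b (𝒢.inv b) (𝒢.inv a) (𝒢.rng_inv b).symm comp_c,
      𝒢.mul_inv_self b, ← h, ← 𝒢.rng_inv a, 𝒢.rng_mul_self]
  have habc : 𝒢.mul (𝒢.mul a b) c = 𝒢.rng a := by
    rw [𝒢.mul_assoc' a b c h (by rw [𝒢.rng_mul _ _ comp_c, 𝒢.rng_inv]),
      hbc, 𝒢.mul_inv_self]
  have h1 : 𝒢.src (𝒢.inv (𝒢.mul a b)) = 𝒢.rng (𝒢.mul a b) := 𝒢.src_inv _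
  calc 𝒢.inv (𝒢.mul a b)
      = 𝒢.mul (𝒢.inv (𝒢.mul a b)) (𝒢.src (𝒢.inv (𝒢.mul a b))) := (𝒢.mul_src_self _).symm
    _ = 𝒢.mul (𝒢.inv (𝒢.mul a b)) (𝒢.mul (𝒢.mul a b) c) := by
        rw [h1, 𝒢.rng_mul _ _ h, ← habc]
    _ = 𝒢.mul (𝒢.mul (𝒢.inv (𝒢.mul a b)) (𝒢.mul a b)) c := by
        rw [𝒢.mul_assoc' _ _ _ h1 (by rw [𝒢.src_mul _ _ h, hc, 𝒢.rng_mul _ _ comp_c, 𝒢.rng_inv])]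
    _ = 𝒢.mul (𝒢.src (𝒢.mul a b)) c := by rw [𝒢.inv_mul_self]
    _ = c := by
        rw [𝒢.src_mul _ _ h, hc, ← 𝒢.rng_inv b, ← 𝒢.rng_mul _ _ comp_c, ← hc, 𝒢.rng_mul_self]

variable {Γ : Type*} [Group Γ] {c : G → Γ}

lemma grading_src (hc : 𝒢.IsGrading c) (g : G) : c (𝒢.src g) = 1 := by
  have h2 : c g = c g * c (𝒢.src g) := by
    conv_lhs => rw [← 𝒢.mul_src_self g]
    rw [hc.2 g (𝒢.src g) (𝒢.rng_src g).symm]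
  exact (left_eq_mul.mp h2).symm ▸ rfl

lemma grading_rng (hc : 𝒢.IsGrading c) (g : G) : c (𝒢.rng g) = 1 := by
  have := 𝒢.grading_src hc (𝒢.inv g); rwa [𝒢.src_inv] at this

lemma grading_unit (hc : 𝒢.IsGrading c) {x : G} (hx : x ∈ 𝒢.unitSpace) : c x = 1 := by
  obtain ⟨g, rfl⟩ := hx; exact 𝒢.grading_src hc g

lemma grading_inv (hc : 𝒢.IsGrading c) (g : G) : c (𝒢.inv g) = (c g)⁻¹ := by
  have h := hc.2 (𝒢.inv g) g (𝒢.src_inv g)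
  rw [𝒢.inv_mul_self, 𝒢.grading_src hc] at h
  exact eq_inv_of_mul_eq_one_left h.symm

end EtaleGroupoid

lemma LocConst.finite_image {X Y : Type*} [TopologicalSpace X] {c : X → Y}
    (hc : IsLocallyConstant c) {K : Set X} (hK : IsCompact K) : (c '' K).Finite := by
  obtain ⟨t, ht⟩ := hK.elim_finite_subcover (fun y : Y => c ⁻¹' {y})
    (fun y => hc {y}) (fun x _ => Set.mem_iUnion.2 ⟨c x, rfl⟩)
  refine (t.finite_toSet).subset ?_
  rintro y ⟨x, hx, rfl⟩
  obtain ⟨i, hi⟩ := Set.mem_iUnion.1 (ht hx)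
  simp only [Set.mem_iUnion, Set.mem_preimage, Set.mem_singleton_iff] at hi
  obtain ⟨hit, hcx⟩ := hi
  simpa [hcx] using hit
end
noncomputable section
namespace DiscreteTwist

variable {R : Type w} [CommRing R] {G : Type u} {S : Type v}
  [TopologicalSpace G] [TopologicalSpace S]
  {𝒢 : AmpleGroupoid G} {𝒮 : EtaleGroupoid S} (T : DiscreteTwist R 𝒢 𝒮)

lemma q_i {x : G} (hx : x ∈ 𝒢.unitSpace) (t : Rˣ) : T.q (T.i x t) = x := by
  have h : T.i x t ∈ {σ | ∃ s : Rˣ, σ = T.i x s} := ⟨t, rfl⟩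
  rw [← T.exact' x hx] at h
  exact h

lemma i_one_mem_unit {x : G} (hx : x ∈ 𝒢.unitSpace) : T.i x 1 ∈ 𝒮.unitSpace := by
  rw [T.unit_eq]; exact ⟨x, hx, rfl⟩

lemma q_mem_unit {σ : S} (hσ : σ ∈ 𝒮.unitSpace) : T.q σ ∈ 𝒢.unitSpace :=
  T.q_unit_bij.mapsTo hσ

lemma unit_eq_i {σ : S} (hσ : σ ∈ 𝒮.unitSpace) : σ = T.i (T.q σ) 1 :=
  T.q_unit_bij.injOn hσ (T.i_one_mem_unit (T.q_mem_unit hσ))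
    (T.q_i (T.q_mem_unit hσ) 1).symm

lemma srcS (σ : S) : 𝒮.src σ = T.i (𝒢.src (T.q σ)) 1 := by
  have h := T.unit_eq_i (𝒮.src_mem_unitSpace σ)
  rwa [T.q_src] at h

lemma rngS (σ : S) : 𝒮.rng σ = T.i (𝒢.rng (T.q σ)) 1 := by
  have h := T.unit_eq_i (𝒮.rng_mem_unitSpace σ)
  rwa [T.q_rng] at h

lemma i_inj {x : G} (hx : x ∈ 𝒢.unitSpace) {s t : Rˣ} (h : T.i x s = T.i x t) :
    s = t := by
  have := T.i_injOn (show ((x, s) : G × Rˣ) ∈ 𝒢.unitSpace ×ˢ (Set.univ : Set Rˣ) from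
    ⟨hx, trivial⟩) (show ((x, t) : G × Rˣ) ∈ 𝒢.unitSpace ×ˢ (Set.univ : Set Rˣ) from
    ⟨hx, trivial⟩) h
  exact congrArg Prod.snd this

lemma rngS_i {x : G} (hx : x ∈ 𝒢.unitSpace) (t : Rˣ) :
    𝒮.rng (T.i x t) = T.i x 1 := by
  rw [T.rngS, T.q_i hx, 𝒢.rng_unit hx]

lemma srcS_i {x : G} (hx : x ∈ 𝒢.unitSpace) (t : Rˣ) :
    𝒮.src (T.i x t) = T.i x 1 := by
  rw [T.srcS, T.q_i hx, 𝒢.src_unit hx]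

lemma i_inv {x : G} (hx : x ∈ 𝒢.unitSpace) (t : Rˣ) :
    𝒮.inv (T.i x t) = T.i x t⁻¹ := by
  have h1 : T.q (𝒮.inv (T.i x t)) = x := by
    rw [T.q_inv, T.q_i hx, 𝒢.inv_unit hx]
  have h2 : 𝒮.inv (T.i x t) ∈ {σ | ∃ s : Rˣ, σ = T.i x s} := by
    rw [← T.exact' x hx]; exact h1
  obtain ⟨s, hs⟩ := h2
  have h3 : T.i x (t * s) = T.i x 1 := by
    rw [← T.i_mul x hx, ← hs, 𝒮.mul_inv_self, T.rngS_i hx]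
  have h4 : t * s = 1 := T.i_inj hx h3
  rw [hs, eq_inv_of_mul_eq_one_right h4]

lemma comp_i_act (σ : S) (t : Rˣ) :
    𝒮.src (T.i (𝒢.rng (T.q σ)) t) = 𝒮.rng σ := by
  rw [T.srcS_i (𝒢.rng_mem_unitSpace _) t, T.rngS]

lemma q_act (t : Rˣ) (σ : S) : T.q (T.act t σ) = T.q σ := by
  rw [act, T.q_mul _ _ (T.comp_i_act σ t), T.q_i (𝒢.rng_mem_unitSpace _),
    𝒢.rng_mul_self]

lemma act_one (σ : S) : T.act 1 σ = σ := by
  rw [act, ← T.rngS, 𝒮.rng_mul_self]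

lemma srcS_act (t : Rˣ) (σ : S) : 𝒮.src (T.act t σ) = 𝒮.src σ :=
  𝒮.src_mul _ _ (T.comp_i_act σ t)

lemma rngS_act (t : Rˣ) (σ : S) : 𝒮.rng (T.act t σ) = 𝒮.rng σ := by
  rw [act, 𝒮.rng_mul _ _ (T.comp_i_act σ t), T.rngS_i (𝒢.rng_mem_unitSpace _), T.rngS]

lemma act_act (s t : Rˣ) (σ : S) : T.act s (T.act t σ) = T.act (s * t) σ := by
  have hr : 𝒢.rng (T.q σ) ∈ 𝒢.unitSpace := 𝒢.rng_mem_unitSpace _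
  have h1 : 𝒮.src (T.i (𝒢.rng (T.q σ)) s) = 𝒮.rng (T.i (𝒢.rng (T.q σ)) t) := by
    rw [T.srcS_i hr, T.rngS_i hr]
  rw [show T.act s (T.act t σ) = 𝒮.mul (T.i (𝒢.rng (T.q σ)) s)
      (𝒮.mul (T.i (𝒢.rng (T.q σ)) t) σ) by rw [act, T.q_act]; rfl,
    ← 𝒮.mul_assoc' _ _ _ h1 (T.comp_i_act σ t),
    T.i_mul _ hr, act]

lemma act_cancel (t : Rˣ) (σ : S) : T.act t (T.act t⁻¹ σ) = σ := by
  rw [T.act_act, mul_inv_cancel, T.act_one]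

lemma act_mul_right {τ σ : S} (s : Rˣ) (h : 𝒢.src (T.q τ) = 𝒢.rng (T.q σ)) :
    𝒮.mul τ (T.act s σ) = T.act s (𝒮.mul τ σ) := by
  have hr : 𝒢.rng (T.q σ) ∈ 𝒢.unitSpace := 𝒢.rng_mem_unitSpace _
  have compS : 𝒮.src τ = 𝒮.rng σ := by rw [T.srcS, h, ← T.rngS]
  have h1 : 𝒮.src τ = 𝒮.rng (T.i (𝒢.rng (T.q σ)) s) := by
    rw [T.rngS_i hr, T.srcS, h]
  have hcen : 𝒮.mul τ (T.i (𝒢.rng (T.q σ)) s) = 𝒮.mul (T.i (𝒢.rng (T.q τ)) s) τ := by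
    have := T.central τ s
    rw [h] at this
    exact this.symm
  have hq : T.q (𝒮.mul τ σ) = 𝒢.mul (T.q τ) (T.q σ) := T.q_mul _ _ compS
  rw [act, ← 𝒮.mul_assoc' _ _ _ h1 (T.comp_i_act σ s), hcen,
    𝒮.mul_assoc' _ _ _ (T.comp_i_act τ s) compS, act, hq,
    𝒢.rng_mul _ _ h]

lemma act_inv (t : Rˣ) (σ : S) : 𝒮.inv (T.act t σ) = T.act t⁻¹ (𝒮.inv σ) := by
  have hr : 𝒢.rng (T.q σ) ∈ 𝒢.unitSpace := 𝒢.rng_mem_unitSpace _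
  have hcen : 𝒮.mul (𝒮.inv σ) (T.i (𝒢.rng (T.q σ)) t⁻¹)
      = 𝒮.mul (T.i (𝒢.rng (𝒢.inv (T.q σ))) t⁻¹) (𝒮.inv σ) := by
    have := T.central (𝒮.inv σ) t⁻¹
    rw [T.q_inv, 𝒢.src_inv] at this
    exact this.symm
  rw [act, 𝒮.inv_mul_rev (T.comp_i_act σ t), T.i_inv hr, hcen, act, T.q_inv]

end DiscreteTwist
end
noncomputable section
set_option linter.unusedSectionVars false

lemma LocConst.ite {X R' : Type*} [TopologicalSpace X] [Zero R'] {f : X → R'}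
    (hf : IsLocallyConstant f) {V : Set X} (hV : IsClopen V) :
    IsLocallyConstant (fun x => if x ∈ V then f x else 0) := by
  rw [IsLocallyConstant.iff_exists_open]
  intro x
  obtain ⟨U, hU, hxU, hUc⟩ := hf.exists_open x
  by_cases hx : x ∈ V
  · exact ⟨U ∩ V, hU.inter hV.2, ⟨hxU, hx⟩, fun y ⟨hyU, hyV⟩ => by
      simp [hyV, hx, hUc y hyU]⟩
  · exact ⟨Vᶜ, hV.1.isOpen_compl, hx, fun y hy => by
      have hy' : y ∉ V := hy
      simp [hy', hx]⟩

lemma LocConst.add {X R' : Type*} [TopologicalSpace X] [AddMonoid R'] {f g : X → R'}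
    (hf : IsLocallyConstant f) (hg : IsLocallyConstant g) :
    IsLocallyConstant (f + g) := by
  rw [IsLocallyConstant.iff_exists_open]
  intro x
  obtain ⟨U, hU, hxU, hUc⟩ := hf.exists_open x
  obtain ⟨U', hU', hxU', hUc'⟩ := hg.exists_open x
  exact ⟨U ∩ U', hU.inter hU', ⟨hxU, hxU'⟩, fun y ⟨h1, h2⟩ => by
    simp [Pi.add_apply, hUc y h1, hUc' y h2]⟩

namespace DiscreteTwist

variable {R : Type w} [CommRing R] {G : Type u} {S : Type v}
  [TopologicalSpace G] [TopologicalSpace S]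
  {𝒢 : AmpleGroupoid G} {𝒮 : EtaleGroupoid S} (T : DiscreteTwist R 𝒢 𝒮)

/-- A local trivialisation chart whose base is a compact open bisection. -/
structure Chart where
  B : Set G
  P : G → S
  openB : IsOpen B
  cptB : IsCompact B
  bis : 𝒢.IsBisection B
  contP : ContinuousOn P B
  sect : ∀ β ∈ B, T.q (P β) = β
  contT : ∀ t : Rˣ, ContinuousOn (fun β => T.act t (P β)) B
  uniq : ∀ σ : S, T.q σ ∈ B → ∃! p : G × Rˣ, p.1 ∈ B ∧ T.act p.2 (P p.1) = σ
  openT : ∀ t : Rˣ, ∀ V ⊆ B, IsOpen V → IsOpen ((fun β => T.act t (P β)) '' V)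

lemma q_act_P {P : G → S} {β : G} (hs : T.q (P β) = β) (t : Rˣ) :
    T.q (T.act t (P β)) = β := by rw [T.q_act, hs]

lemma act_eq_mul_i {P : G → S} {β : G} (hs : T.q (P β) = β) (t : Rˣ) :
    T.act t (P β) = 𝒮.mul (T.i (𝒢.rng β) t) (P β) := by
  rw [act, hs]

lemma exists_chart (α : G) {O : Set G} (hO : IsOpen O) (hα : α ∈ O) :
    ∃ C : T.Chart, α ∈ C.B ∧ C.B ⊆ O := by
  obtain ⟨B₀, hB₀open, hαB₀, hbis₀, P, hPcont, hPsec, hcontT, huniq, hopenT⟩ :=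
    T.loc_triv α
  obtain ⟨B, hBcob, hαB, hBsub⟩ := 𝒢.ample.exists_subset_of_mem_open
    (show α ∈ B₀ ∩ O from ⟨hαB₀, hα⟩) (hB₀open.inter hO)
  have hBB₀ : B ⊆ B₀ := fun β hβ => (hBsub hβ).1
  have hsect : ∀ β ∈ B, T.q (P β) = β := fun β hβ => hPsec β (hBB₀ hβ)
  have hTeq : ∀ t : Rˣ, ∀ β ∈ B₀, T.act t (P β)
      = 𝒮.mul (T.i (𝒢.rng β) t) (P β) := fun t β hβ =>
    T.act_eq_mul_i (hPsec β hβ) t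
  refine ⟨⟨B, P, hBcob.2.1, hBcob.1, hBcob.2.2, hPcont.mono hBB₀, hsect, ?_, ?_, ?_⟩,
    hαB, fun β hβ => (hBsub hβ).2⟩
  · intro t
    exact (hcontT t |>.mono hBB₀).congr fun β hβ => hTeq t β (hBB₀ hβ)
  · intro σ hσ
    obtain ⟨p, ⟨hp1, hp2⟩, hpuniq⟩ := huniq σ (hBB₀ hσ)
    have hp2' : T.act p.2 (P p.1) = σ := by rw [hTeq p.2 p.1 hp1]; exact hp2
    have hqp : p.1 = T.q σ := by rw [← hp2', T.q_act_P (hPsec p.1 hp1)]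
    refine ⟨p, ⟨hqp ▸ hσ, hp2'⟩, ?_⟩
    intro p' ⟨hp'1, hp'2⟩
    exact hpuniq p' ⟨hBB₀ hp'1, by rw [← hTeq p'.2 p'.1 (hBB₀ hp'1)]; exact hp'2⟩
  · intro t V hVB hVopen
    have := hopenT t V (hVB.trans hBB₀) hVopen
    rwa [Set.image_congr (fun β hβ => (hTeq t β (hBB₀ (hVB hβ))).symm)] at this

lemma chart_decomp (C : T.Chart) {σ : S} (h : T.q σ ∈ C.B) :
    ∃ t : Rˣ, σ = T.act t (C.P (T.q σ)) := by
  obtain ⟨p, ⟨hp1, hp2⟩, -⟩ := C.uniq σ h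
  have hqp : p.1 = T.q σ := by rw [← hp2, T.q_act_P (C.sect p.1 hp1)]
  exact ⟨p.2, by rw [← hqp, hp2]⟩

lemma chart_unique (C : T.Chart) {β : G} (hβ : β ∈ C.B) {s t : Rˣ}
    (h : T.act s (C.P β) = T.act t (C.P β)) : s = t := by
  obtain ⟨p, hp, hpuniq⟩ := C.uniq (T.act t (C.P β)) (by rw [T.q_act_P (C.sect β hβ)]; exact hβ)
  have h1 := hpuniq (β, s) ⟨hβ, h⟩
  have h2 := hpuniq (β, t) ⟨hβ, rfl⟩
  have := h1.trans h2.symm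
  exact congrArg Prod.snd this

lemma exists_act_of_q_eq {σ σ' : S} (h : T.q σ = T.q σ') :
    ∃ t : Rˣ, σ = T.act t σ' := by
  obtain ⟨C, hmem, -⟩ := T.exists_chart (T.q σ) isOpen_univ trivial
  obtain ⟨t, ht⟩ := T.chart_decomp C hmem
  obtain ⟨s, hs⟩ := T.chart_decomp C (show T.q σ' ∈ C.B from h ▸ hmem)
  rw [← h] at hs
  refine ⟨t * s⁻¹, ?_⟩
  rw [ht, hs, T.act_act, inv_mul_cancel_right]

lemma act_free {t : Rˣ} {σ : S} (h : T.act t σ = σ) : t = 1 := by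
  obtain ⟨C, hmem, -⟩ := T.exists_chart (T.q σ) isOpen_univ trivial
  obtain ⟨s, hsd⟩ := T.chart_decomp C hmem
  have h2 : T.act (t * s) (C.P (T.q σ)) = T.act s (C.P (T.q σ)) := by
    rw [← T.act_act, ← hsd, h, hsd]
  have := T.chart_unique C hmem h2
  exact mul_right_cancel (by rw [this, one_mul])

lemma act_inj {s t : Rˣ} {σ : S} (h : T.act s σ = T.act t σ) : s = t := by
  have : T.act (t⁻¹ * s) σ = σ := by
    rw [← T.act_act, h, T.act_act, inv_mul_cancel, T.act_one]
  have h1 := T.act_free this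
  rwa [inv_mul_eq_one, eq_comm] at h1

lemma isOpenMap_q : IsOpenMap T.q := by
  intro O hO
  rw [isOpen_iff_forall_mem_open]
  rintro α ⟨σ, hσO, rfl⟩
  obtain ⟨C, hmem, -⟩ := T.exists_chart (T.q σ) isOpen_univ trivial
  obtain ⟨t, ht⟩ := T.chart_decomp C hmem
  refine ⟨C.B ∩ (fun β => T.act t (C.P β)) ⁻¹' O, ?_, ?_, hmem, ?_⟩
  · rintro β ⟨hβB, hβO⟩
    exact ⟨T.act t (C.P β), hβO, T.q_act_P (C.sect β hβB) t⟩
  · exact (C.contT t).isOpen_inter_preimage C.openB hO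
  · show T.act t (C.P (T.q σ)) ∈ O
    rw [← ht]; exact hσO

/-- `Rˣ`-invariance of a subset of `Σ`. -/
def ActInv (A : Set S) : Prop := ∀ (t : Rˣ) σ, σ ∈ A → T.act t σ ∈ A

lemma act_cancel' (t : Rˣ) (σ : S) : T.act t⁻¹ (T.act t σ) = σ := by
  rw [T.act_act, inv_mul_cancel, T.act_one]

lemma actInv_mem_iff {A : Set S} (hA : T.ActInv A) (t : Rˣ) (σ : S) :
    T.act t σ ∈ A ↔ σ ∈ A :=
  ⟨fun h => by have := hA t⁻¹ _ h; rwa [T.act_cancel'] at this, hA t σ⟩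

lemma isClosed_q_image {A : Set S} (hA : T.ActInv A) (hcl : IsClosed A) :
    IsClosed (T.q '' A) := by
  rw [← isOpen_compl_iff, isOpen_iff_forall_mem_open]
  intro α hα
  obtain ⟨C, hmem, -⟩ := T.exists_chart α isOpen_univ trivial
  refine ⟨C.B ∩ C.P ⁻¹' Aᶜ, ?_, ?_, hmem, ?_⟩
  · rintro β ⟨hβB, hβA⟩ ⟨σ, hσA, rfl⟩
    obtain ⟨t, ht⟩ := T.chart_decomp C hβB
    have hP : C.P (T.q σ) = T.act t⁻¹ σ := by
      conv_rhs => rw [ht]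
      rw [T.act_cancel']
    exact hβA (by rw [hP]; exact hA t⁻¹ σ hσA)
  · exact C.contP.isOpen_inter_preimage C.openB hcl.isOpen_compl
  · intro hPA
    exact hα ⟨C.P α, hPA, C.sect α hmem⟩

lemma q_image_diff {A A' : Set S} (hA' : T.ActInv A') :
    T.q '' (A \ A') = T.q '' A \ T.q '' A' := by
  ext α
  constructor
  · rintro ⟨σ, ⟨hσA, hσA'⟩, rfl⟩
    refine ⟨⟨σ, hσA, rfl⟩, ?_⟩
    rintro ⟨σ', hσ', hq⟩
    obtain ⟨t, ht⟩ := T.exists_act_of_q_eq hq.symm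
    exact hσA' (ht ▸ hA' t σ' hσ')
  · rintro ⟨⟨σ, hσA, rfl⟩, hnot⟩
    exact ⟨σ, ⟨hσA, fun h => hnot ⟨σ, h, rfl⟩⟩, rfl⟩

lemma q_sec (α : G) : T.q (T.sec α) = α := Function.surjInv_eq T.q_surj α

section MemA
variable [Nontrivial R]

lemma memA_supp_act {f : S → R} (hf : T.MemA f) (t : Rˣ) (σ : S) :
    T.act t σ ∈ Function.support f ↔ σ ∈ Function.support f := by
  simp only [Function.mem_support, hf.2.1 t σ, ne_eq, Units.mul_right_eq_zero]

lemma memA_supp_inv {f : S → R} (hf : T.MemA f) : T.ActInv (Function.support f) :=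
  fun t σ h => (T.memA_supp_act hf t σ).2 h

lemma memA_supp_clopen {f : S → R} (hf : T.MemA f) :
    IsClopen (Function.support f) := by
  have h0 : Function.support f = {σ | f σ = 0}ᶜ := by
    ext σ; simp [Function.mem_support]
  rw [h0]
  exact ⟨(hf.1.isOpen_fiber 0).isClosed_compl,
    (hf.1.isClosed_fiber 0).isOpen_compl⟩

lemma memA_q_supp_clopen {f : S → R} (hf : T.MemA f) :
    IsClopen (T.q '' Function.support f) :=
  ⟨T.isClosed_q_image (T.memA_supp_inv hf) (T.memA_supp_clopen hf).1,
    T.isOpenMap_q _ (T.memA_supp_clopen hf).2⟩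

lemma memA_sec_ne {f : S → R} (hf : T.MemA f) {α : G} :
    α ∈ T.q '' Function.support f ↔ f (T.sec α) ≠ 0 := by
  constructor
  · rintro ⟨σ, hσ, rfl⟩
    obtain ⟨t, ht⟩ := T.exists_act_of_q_eq (T.q_sec (T.q σ))
    rw [ht, hf.2.1]
    simpa [Units.mul_right_eq_zero] using hσ
  · intro h
    exact ⟨T.sec α, h, T.q_sec α⟩

end MemA

lemma memA_zero : T.MemA (0 : S → R) := by
  refine ⟨IsLocallyConstant.const 0, fun t σ => by simp, ?_⟩
  simp [Function.support_zero]

lemma memA_neg {f : S → R} (hf : T.MemA f) : T.MemA (-f) := by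
  refine ⟨?_, fun t σ => by simp [Pi.neg_apply, hf.2.1 t σ, mul_comm], ?_⟩
  · have := hf.1.comp (g := fun r : R => -r)
    exact this
  · have : Function.support (-f) = Function.support f := Function.support_neg f
    rw [this]; exact hf.2.2

lemma memA_add [Nontrivial R] {f g : S → R} (hf : T.MemA f) (hg : T.MemA g) :
    T.MemA (f + g) := by
  have hlc : IsLocallyConstant (f + g) := LocConst.add hf.1 hg.1
  have hctr : ∀ (t : Rˣ) σ, (f + g) (T.act t σ) = ((t⁻¹ : Rˣ) : R) * (f + g) σ := by
    intro t σ
    simp [Pi.add_apply, hf.2.1 t σ, hg.2.1 t σ, mul_add]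
  refine ⟨hlc, hctr, ?_⟩
  have hinv : T.ActInv (Function.support (f + g)) := by
    intro t σ h
    simp only [Function.mem_support, hctr t σ, ne_eq, Units.mul_right_eq_zero]
    exact h
  have hclopen : IsClopen (Function.support (f + g)) := by
    have h0 : Function.support (f + g) = {σ | (f + g) σ = 0}ᶜ := by
      ext σ; simp [Function.mem_support]
    rw [h0]
    exact ⟨(hlc.isOpen_fiber 0).isClosed_compl, (hlc.isClosed_fiber 0).isOpen_compl⟩
  refine IsCompact.of_isClosed_subset (hf.2.2.union hg.2.2)
    (T.isClosed_q_image hinv hclopen.1) ?_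
  rw [← Set.image_union]
  exact Set.image_mono (Function.support_add f g)

lemma memA_restrict [Nontrivial R] {f : S → R} (hf : T.MemA f) {U : Set G}
    (hU : IsClopen U) :
    T.MemA (fun σ => if T.q σ ∈ U then f σ else 0) := by
  have hVc : IsClopen (T.q ⁻¹' U) := ⟨hU.1.preimage T.continuous_q,
    hU.2.preimage T.continuous_q⟩
  have hlc : IsLocallyConstant (fun σ => if T.q σ ∈ U then f σ else 0) := by
    have := LocConst.ite hf.1 hVc
    simpa [Set.mem_preimage] using this
  have hctr : ∀ (t : Rˣ) σ, (if T.q (T.act t σ) ∈ U then f (T.act t σ) else 0)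
      = ((t⁻¹ : Rˣ) : R) * (if T.q σ ∈ U then f σ else 0) := by
    intro t σ
    rw [T.q_act]
    by_cases h : T.q σ ∈ U <;> simp [h, hf.2.1 t σ]
  have hsupp : Function.support (fun σ => if T.q σ ∈ U then f σ else 0)
      = Function.support f ∩ T.q ⁻¹' U := by
    ext σ
    by_cases h : T.q σ ∈ U <;> simp [Function.mem_support, h]
  refine ⟨hlc, hctr, ?_⟩
  rw [hsupp, Set.image_inter_preimage]
  exact hf.2.2.inter_right hU.1

end DiscreteTwist
end
noncomputable section
set_option linter.unusedSectionVars false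

namespace EtaleGroupoid

variable {G : Type u} [TopologicalSpace G] (𝒢 : EtaleGroupoid G)

lemma inv_mul_cancel_left {a b : G} (h : 𝒢.src a = 𝒢.rng b) :
    𝒢.mul (𝒢.inv a) (𝒢.mul a b) = b := by
  rw [← 𝒢.mul_assoc' _ _ _ (𝒢.src_inv a) h, 𝒢.inv_mul_self, h, 𝒢.rng_mul_self]

lemma mul_inv_cancel_left {a b : G} (h : 𝒢.rng a = 𝒢.rng b) :
    𝒢.mul a (𝒢.mul (𝒢.inv a) b) = b := by
  rw [← 𝒢.mul_assoc' _ _ _ (𝒢.rng_inv a).symm (by rw [𝒢.src_inv, h]),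
    𝒢.mul_inv_self, h, 𝒢.rng_mul_self]

lemma setMul_compact [T2Space G] {A K : Set G} (hA : IsCompact A) (hK : IsCompact K) :
    IsCompact (𝒢.setMul A K) := by
  have hD : IsCompact ((A ×ˢ K) ∩ {p : G × G | 𝒢.src p.1 = 𝒢.rng p.2}) :=
    (hA.prod hK).inter_right
      (isClosed_eq (𝒢.continuous_src.comp continuous_fst)
        (𝒢.continuous_rng.comp continuous_snd))
  have heq : 𝒢.setMul A K
      = (fun p : G × G => 𝒢.mul p.1 p.2) '' ((A ×ˢ K) ∩ {p | 𝒢.src p.1 = 𝒢.rng p.2}) := by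
    ext g
    constructor
    · rintro ⟨a, ha, b, hb, hcomp, rfl⟩
      exact ⟨(a, b), ⟨⟨ha, hb⟩, hcomp⟩, rfl⟩
    · rintro ⟨⟨a, b⟩, ⟨⟨ha, hb⟩, hcomp⟩, rfl⟩
      exact ⟨a, ha, b, hb, hcomp, rfl⟩
  rw [heq]
  exact hD.image_of_continuousOn (𝒢.continuousOn_mul.mono Set.inter_subset_right)

lemma mem_setMul {A K : Set G} {a b : G} (ha : a ∈ A) (hb : b ∈ K)
    (h : 𝒢.src a = 𝒢.rng b) : 𝒢.mul a b ∈ 𝒢.setMul A K :=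
  ⟨a, ha, b, hb, h, rfl⟩

end EtaleGroupoid

namespace DiscreteTwist

variable {R : Type w} [CommRing R] {G : Type u} {S : Type v}
  [TopologicalSpace G] [TopologicalSpace S] [T2Space G] [T2Space S]
  {𝒢 : AmpleGroupoid G} {𝒮 : EtaleGroupoid S} (T : DiscreteTwist R 𝒢 𝒮)

lemma srcS_P {C : T.Chart} {β : G} (hβ : β ∈ C.B) :
    𝒮.src (C.P β) = T.i (𝒢.src β) 1 := by rw [T.srcS, C.sect β hβ]

lemma rngS_P {C : T.Chart} {β : G} (hβ : β ∈ C.B) :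
    𝒮.rng (C.P β) = T.i (𝒢.rng β) 1 := by rw [T.rngS, C.sect β hβ]

lemma compS_of {τ σ : S} (h : 𝒢.rng (T.q τ) = 𝒢.rng (T.q σ)) :
    𝒮.src (𝒮.inv τ) = 𝒮.rng σ := by
  rw [𝒮.src_inv, T.rngS, T.rngS, h]

/-- The canonical `A_R(G;Σ)`-element supported over the base of a chart. -/
def chi (C : T.Chart) : S → R := fun σ =>
  if h : T.q σ ∈ C.B ∧ ∃ t : Rˣ, σ = T.act t (C.P (T.q σ)) then
    (((Classical.choose h.2)⁻¹ : Rˣ) : R) else 0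

lemma chi_act {C : T.Chart} {β : G} (hβ : β ∈ C.B) (t : Rˣ) :
    T.chi C (T.act t (C.P β)) = ((t⁻¹ : Rˣ) : R) := by
  have hq : T.q (T.act t (C.P β)) = β := T.q_act_P (C.sect β hβ) t
  have hcond : T.q (T.act t (C.P β)) ∈ C.B ∧
      ∃ s : Rˣ, T.act t (C.P β) = T.act s (C.P (T.q (T.act t (C.P β)))) :=
    ⟨by rw [hq]; exact hβ, ⟨t, by rw [hq]⟩⟩
  rw [chi, dif_pos hcond]
  obtain ⟨c, hc⟩ : ∃ c : Rˣ, Classical.choose hcond.2 = c := ⟨_, rfl⟩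
  have hspec := Classical.choose_spec hcond.2
  rw [hc] at hspec ⊢
  have hPq : C.P (T.q (T.act t (C.P β))) = C.P β := by rw [hq]
  rw [hPq] at hspec
  rw [T.chart_unique C hβ hspec.symm]

lemma chi_eq_zero {C : T.Chart} {σ : S} (h : T.q σ ∉ C.B) : T.chi C σ = 0 := by
  rw [chi, dif_neg (fun hc => h hc.1)]

lemma chi_spec {C : T.Chart} {σ : S} (h : T.q σ ∈ C.B) :
    ∃ t : Rˣ, σ = T.act t (C.P (T.q σ)) ∧ T.chi C σ = ((t⁻¹ : Rˣ) : R) := by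
  obtain ⟨t, ht⟩ := T.chart_decomp C h
  exact ⟨t, ht, by rw [ht, T.chi_act h t]⟩

lemma chi_P {C : T.Chart} {β : G} (hβ : β ∈ C.B) : T.chi C (C.P β) = 1 := by
  have := T.chi_act hβ 1
  rw [T.act_one] at this
  simpa using this

lemma supp_chi [Nontrivial R] (C : T.Chart) :
    Function.support (T.chi C) = T.q ⁻¹' C.B := by
  ext σ
  simp only [Function.mem_support, Set.mem_preimage]
  constructor
  · intro h
    by_contra hB
    exact h (T.chi_eq_zero hB)
  · intro h
    obtain ⟨t, -, hval⟩ := T.chi_spec h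
    rw [hval]
    exact Units.ne_zero _

lemma chi_contra (C : T.Chart) (t : Rˣ) (σ : S) :
    T.chi C (T.act t σ) = ((t⁻¹ : Rˣ) : R) * T.chi C σ := by
  by_cases h : T.q σ ∈ C.B
  · obtain ⟨s, hs, hval⟩ := T.chi_spec h
    have hq : T.q (T.act t σ) = T.q σ := T.q_act t σ
    have : T.act t σ = T.act (t * s) (C.P (T.q (T.act t σ))) := by
      rw [hq, ← T.act_act, ← hs]
    rw [this, T.chi_act (by rw [hq]; exact h) (t * s), hval, hq] at *
    rw [mul_inv, Units.val_mul, mul_comm]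
  · have h' : T.q (T.act t σ) ∉ C.B := by rw [T.q_act]; exact h
    rw [T.chi_eq_zero h, T.chi_eq_zero h', mul_zero]

lemma memA_of_parts {f : S → R} (h1 : IsLocallyConstant f)
    (h2 : ∀ (t : Rˣ) σ, f (T.act t σ) = ((t⁻¹ : Rˣ) : R) * f σ)
    {K : Set G} (hK : IsCompact K) (hsub : T.q '' Function.support f ⊆ K) :
    T.MemA f := by
  refine ⟨h1, h2, ?_⟩
  have hinv : T.ActInv (Function.support f) := by
    intro t σ h
    simp only [Function.mem_support, h2 t σ, ne_eq, Units.mul_right_eq_zero]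
    exact h
  have hclopen : IsClopen (Function.support f) := by
    have h0 : Function.support f = {σ | f σ = 0}ᶜ := by
      ext σ; simp [Function.mem_support]
    rw [h0]
    exact ⟨(h1.isOpen_fiber 0).isClosed_compl, (h1.isClosed_fiber 0).isOpen_compl⟩
  exact IsCompact.of_isClosed_subset hK (T.isClosed_q_image hinv hclopen.1) hsub

lemma memA_chi [Nontrivial R] (C : T.Chart) : T.MemA (T.chi C) := by
  have hlc : IsLocallyConstant (T.chi C) := by
    rw [IsLocallyConstant.iff_exists_open]
    intro σ
    by_cases h : T.q σ ∈ C.B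
    · obtain ⟨t, ht, hval⟩ := T.chi_spec h
      refine ⟨(fun β => T.act t (C.P β)) '' C.B,
        C.openT t C.B subset_rfl C.openB, ⟨T.q σ, h, ht.symm⟩, ?_⟩
      rintro σ' ⟨β, hβ, rfl⟩
      rw [T.chi_act hβ t, hval]
    · refine ⟨T.q ⁻¹' C.Bᶜ, (C.cptB.isClosed.isOpen_compl).preimage T.continuous_q,
        h, ?_⟩
      intro σ' hσ'
      rw [T.chi_eq_zero hσ', T.chi_eq_zero h]
  refine T.memA_of_parts hlc (T.chi_contra C) C.cptB ?_
  rw [T.supp_chi C, Set.image_preimage_eq _ T.q_surj]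

end DiscreteTwist
end
noncomputable section
set_option linter.unusedSectionVars false
set_option maxHeartbeats 1000000

namespace DiscreteTwist

variable {R : Type w} [CommRing R] {G : Type u} {S : Type v}
  [TopologicalSpace G] [TopologicalSpace S] [T2Space G] [T2Space S]
  {𝒢 : AmpleGroupoid G} {𝒮 : EtaleGroupoid S} (T : DiscreteTwist R 𝒢 𝒮)
  [Nontrivial R]

/-- Contravariance property (the middle clause of `MemA`). -/
def Ctr (f : S → R) : Prop := ∀ (t : Rˣ) (σ : S), f (T.act t σ) = ((t⁻¹ : Rˣ) : R) * f σ

lemma q_mul_inv_sec {α : G} {σ : S} (hr : 𝒢.rng α = 𝒢.rng (T.q σ)) :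
    T.q (𝒮.mul (𝒮.inv (T.sec α)) σ) = 𝒢.mul (𝒢.inv α) (T.q σ) := by
  have hc : 𝒮.src (𝒮.inv (T.sec α)) = 𝒮.rng σ :=
    T.compS_of (by rw [T.q_sec]; exact hr)
  rw [T.q_mul _ _ hc, T.q_inv, T.q_sec]

lemma conv_chi_apply_zero (C : T.Chart) (f : S → R) (σ : S)
    (h : ∀ β ∈ C.B, 𝒢.rng β ≠ 𝒢.rng (T.q σ)) :
    T.conv (T.chi C) f σ = 0 := by
  simp only [DiscreteTwist.conv]
  apply finsum_eq_zero_of_forall_eq_zero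
  intro α
  by_cases hr : 𝒢.rng α = 𝒢.rng (T.q σ)
  · rw [if_pos hr]
    have hB : T.q (T.sec α) ∉ C.B := by
      rw [T.q_sec]; intro hB; exact h α hB hr
    rw [T.chi_eq_zero hB, zero_mul]
  · rw [if_neg hr]

lemma conv_chi_apply {C : T.Chart} (f : S → R) {β : G} {σ : S}
    (hβ : β ∈ C.B) (hr : 𝒢.rng β = 𝒢.rng (T.q σ)) :
    T.conv (T.chi C) f σ = T.chi C (T.sec β) * f (𝒮.mul (𝒮.inv (T.sec β)) σ) := by
  simp only [DiscreteTwist.conv]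
  rw [finsum_eq_single _ β ?_, if_pos hr]
  intro α hne
  by_cases hr' : 𝒢.rng α = 𝒢.rng (T.q σ)
  · rw [if_pos hr']
    have hB : T.q (T.sec α) ∉ C.B := by
      rw [T.q_sec]
      intro hB
      exact hne (C.bis.2 hB hβ (hr'.trans hr.symm))
    rw [T.chi_eq_zero hB, zero_mul]
  · rw [if_neg hr']

lemma mul_inv_act {τ σ : S} (t : Rˣ) (h : 𝒢.rng (T.q τ) = 𝒢.rng (T.q σ)) :
    𝒮.mul (𝒮.inv (T.act t τ)) σ = T.act t⁻¹ (𝒮.mul (𝒮.inv τ) σ) := by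
  have h1 : 𝒮.src (T.i (𝒢.rng (T.q (𝒮.inv τ))) t⁻¹) = 𝒮.rng (𝒮.inv τ) :=
    T.comp_i_act _ _
  have h2 : 𝒮.src (𝒮.inv τ) = 𝒮.rng σ := T.compS_of h
  have h3 : T.q (𝒮.mul (𝒮.inv τ) σ) = 𝒢.mul (𝒢.inv (T.q τ)) (T.q σ) := by
    rw [T.q_mul _ _ h2, T.q_inv]
  have h4 : 𝒢.rng (T.q (𝒮.inv τ)) = 𝒢.rng (T.q (𝒮.mul (𝒮.inv τ) σ)) := by
    rw [h3, T.q_inv, 𝒢.rng_mul _ _ (by rw [𝒢.src_inv, h])]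
  calc 𝒮.mul (𝒮.inv (T.act t τ)) σ
      = 𝒮.mul (T.act t⁻¹ (𝒮.inv τ)) σ := by rw [T.act_inv]
    _ = 𝒮.mul (𝒮.mul (T.i (𝒢.rng (T.q (𝒮.inv τ))) t⁻¹) (𝒮.inv τ)) σ := rfl
    _ = 𝒮.mul (T.i (𝒢.rng (T.q (𝒮.inv τ))) t⁻¹) (𝒮.mul (𝒮.inv τ) σ) :=
        𝒮.mul_assoc' _ _ _ h1 h2
    _ = T.act t⁻¹ (𝒮.mul (𝒮.inv τ) σ) := by rw [act, ← h4]

lemma lift_indep {c f : S → R} (hc : T.Ctr c) (hf : T.Ctr f) {τ τ' σ : S}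
    (hq : T.q τ = T.q τ') (h : 𝒢.rng (T.q τ') = 𝒢.rng (T.q σ)) :
    c τ * f (𝒮.mul (𝒮.inv τ) σ) = c τ' * f (𝒮.mul (𝒮.inv τ') σ) := by
  obtain ⟨t, rfl⟩ := T.exists_act_of_q_eq hq
  rw [hc, T.mul_inv_act t h, hf]
  simp only [inv_inv]
  rw [mul_mul_mul_comm, ← Units.val_mul, inv_mul_cancel, Units.val_one, one_mul]

lemma conv_chi_apply_P {C : T.Chart} {f : S → R} (hf : T.Ctr f) {β : G} {σ : S}
    (hβ : β ∈ C.B) (hr : 𝒢.rng β = 𝒢.rng (T.q σ)) :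
    T.conv (T.chi C) f σ = f (𝒮.mul (𝒮.inv (C.P β)) σ) := by
  have hq : T.q (T.sec β) = T.q (C.P β) := by rw [T.q_sec, C.sect β hβ]
  have h' : 𝒢.rng (T.q (C.P β)) = 𝒢.rng (T.q σ) := by rw [C.sect β hβ]; exact hr
  rw [T.conv_chi_apply f hβ hr,
    T.lift_indep (τ := T.sec β) (τ' := C.P β) (σ := σ) (T.chi_contra C) hf hq h',
    T.chi_P hβ, one_mul]

lemma srcS_P_eq_rngS {C : T.Chart} {β : G} {σ : S} (hβ : β ∈ C.B)
    (hcomp : 𝒢.src β = 𝒢.rng (T.q σ)) : 𝒮.src (C.P β) = 𝒮.rng σ := by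
  rw [T.srcS_P hβ, hcomp, ← T.rngS]

lemma conv_chi_translate {C : T.Chart} {f : S → R} (hf : T.Ctr f) {β : G} {σ : S}
    (hβ : β ∈ C.B) (hcomp : 𝒢.src β = 𝒢.rng (T.q σ)) :
    T.conv (T.chi C) f (𝒮.mul (C.P β) σ) = f σ := by
  have hS : 𝒮.src (C.P β) = 𝒮.rng σ := T.srcS_P_eq_rngS hβ hcomp
  have hq1 : T.q (𝒮.mul (C.P β) σ) = 𝒢.mul β (T.q σ) := by
    rw [T.q_mul _ _ hS, C.sect β hβ]
  have hr : 𝒢.rng β = 𝒢.rng (T.q (𝒮.mul (C.P β) σ)) := by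
    rw [hq1, 𝒢.rng_mul _ _ hcomp]
  rw [T.conv_chi_apply_P hf hβ hr, 𝒮.inv_mul_cancel_left hS]

lemma conv_chi_contra {C : T.Chart} {f : S → R} (hf : T.Ctr f) :
    T.Ctr (T.conv (T.chi C) f) := by
  intro t σ
  by_cases h0 : ∃ β ∈ C.B, 𝒢.rng β = 𝒢.rng (T.q σ)
  · obtain ⟨β, hβ, hr⟩ := h0
    have hr' : 𝒢.rng β = 𝒢.rng (T.q (T.act t σ)) := by rw [T.q_act]; exact hr
    rw [T.conv_chi_apply_P hf hβ hr', T.conv_chi_apply_P hf hβ hr]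
    have hmv : 𝒮.mul (𝒮.inv (C.P β)) (T.act t σ)
        = T.act t (𝒮.mul (𝒮.inv (C.P β)) σ) :=
      T.act_mul_right t (by rw [T.q_inv, C.sect β hβ, 𝒢.src_inv, hr])
    rw [hmv, hf]
  · push_neg at h0
    have h0' : ∀ β ∈ C.B, 𝒢.rng β ≠ 𝒢.rng (T.q (T.act t σ)) := by
      intro β hβ; rw [T.q_act]; exact h0 β hβ
    rw [T.conv_chi_apply_zero C f _ h0', T.conv_chi_apply_zero C f σ h0, mul_zero]

lemma conv_chi_supp_subset {C : T.Chart} {f : S → R} (hf : T.MemA f) :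
    T.q '' Function.support (T.conv (T.chi C) f)
      ⊆ 𝒢.setMul C.B (T.q '' Function.support f) := by
  rintro α ⟨σ, hσ, rfl⟩
  rw [Function.mem_support] at hσ
  have h0 : ∃ β ∈ C.B, 𝒢.rng β = 𝒢.rng (T.q σ) := by
    by_contra h
    push_neg at h
    exact hσ (T.conv_chi_apply_zero C f σ h)
  obtain ⟨β, hβ, hr⟩ := h0
  rw [T.conv_chi_apply f hβ hr] at hσ
  have hfne : f (𝒮.mul (𝒮.inv (T.sec β)) σ) ≠ 0 := fun h => hσ (by rw [h, mul_zero])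
  have hmem : 𝒢.mul (𝒢.inv β) (T.q σ) ∈ T.q '' Function.support f := by
    rw [← T.q_mul_inv_sec hr]
    exact ⟨_, hfne, rfl⟩
  have hcomp : 𝒢.src β = 𝒢.rng (𝒢.mul (𝒢.inv β) (T.q σ)) := by
    rw [𝒢.rng_mul _ _ (by rw [𝒢.src_inv]; exact hr), 𝒢.rng_inv]
  have := 𝒢.mem_setMul hβ hmem hcomp
  rwa [𝒢.mul_inv_cancel_left hr] at this

lemma memA_conv_chi {C : T.Chart} {f : S → R} (hf : T.MemA f) :
    T.MemA (T.conv (T.chi C) f) := by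
  have hcont_rq : Continuous fun σ : S => 𝒢.rng (T.q σ) :=
    𝒢.continuous_rng.comp T.continuous_q
  have hlc : IsLocallyConstant (T.conv (T.chi C) f) := by
    rw [IsLocallyConstant.iff_exists_open]
    intro σ₀
    by_cases h0 : ∃ β ∈ C.B, 𝒢.rng β = 𝒢.rng (T.q σ₀)
    · obtain ⟨β₀, hβ₀, hr₀⟩ := h0
      set Ω : Set S := (fun σ => 𝒢.rng (T.q σ)) ⁻¹' (𝒢.rng '' C.B) with hΩdef
      have hΩopen : IsOpen Ω := (𝒢.isOpenMap_rng _ C.openB).preimage hcont_rq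
      have hσ₀Ω : σ₀ ∈ Ω := ⟨β₀, hβ₀, hr₀⟩
      set ρ : S → G := fun σ =>
        if h : ∃ β, β ∈ C.B ∧ 𝒢.rng β = 𝒢.rng (T.q σ) then h.choose else β₀ with hρdef
      have hρ : ∀ σ ∈ Ω, ρ σ ∈ C.B ∧ 𝒢.rng (ρ σ) = 𝒢.rng (T.q σ) := by
        intro σ hσ
        obtain ⟨β, hβ, hb⟩ := hσ
        have h : ∃ β, β ∈ C.B ∧ 𝒢.rng β = 𝒢.rng (T.q σ) := ⟨β, hβ, hb⟩
        rw [hρdef]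
        simp only [dif_pos h]
        exact h.choose_spec
      have hρcont : ∀ σ₁ ∈ Ω, ContinuousAt ρ σ₁ := by
        intro σ₁ hσ₁
        rw [continuousAt_def]
        intro A hA
        obtain ⟨W, hWA, hWopen, hmemW⟩ := mem_nhds_iff.1 hA
        have hK' : IsCompact (𝒢.rng '' (C.B \ W)) :=
          (C.cptB.diff hWopen).image 𝒢.continuous_rng
        have hnot : 𝒢.rng (T.q σ₁) ∉ 𝒢.rng '' (C.B \ W) := by
          rintro ⟨β, ⟨hβB, hβW⟩, hβr⟩
          have hβeq : β = ρ σ₁ :=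
            C.bis.2 hβB (hρ σ₁ hσ₁).1 (by rw [hβr, (hρ σ₁ hσ₁).2])
          exact hβW (hβeq ▸ hmemW)
        have hNopen : IsOpen ((fun σ => 𝒢.rng (T.q σ)) ⁻¹' (𝒢.rng '' (C.B \ W))ᶜ ∩ Ω) :=
          ((hK'.isClosed.isOpen_compl).preimage hcont_rq).inter hΩopen
        refine Filter.mem_of_superset (hNopen.mem_nhds ⟨hnot, hσ₁⟩) ?_
        rintro σ ⟨hσc, hσΩ⟩
        have h1 := hρ σ hσΩ
        have hW : ρ σ ∈ W := by
          by_contra hWc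
          exact hσc ⟨ρ σ, ⟨h1.1, hWc⟩, h1.2⟩
        exact hWA hW
      set m : S → S := fun σ => 𝒮.mul (𝒮.inv (C.P (ρ σ))) σ with hmdef
      have hcomp𝒮 : ∀ σ ∈ Ω, 𝒮.src (𝒮.inv (C.P (ρ σ))) = 𝒮.rng σ := by
        intro σ hσ
        rw [𝒮.src_inv, T.rngS_P (hρ σ hσ).1, (hρ σ hσ).2, ← T.rngS]
      have hmcont : ContinuousAt m σ₀ := by
        have hP : ContinuousAt (fun σ => C.P (ρ σ)) σ₀ :=
          (C.contP.continuousAt (C.openB.mem_nhds (hρ σ₀ hσ₀Ω).1)).comp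
            (hρcont σ₀ hσ₀Ω)
        have hpair : ContinuousAt (fun σ => (𝒮.inv (C.P (ρ σ)), σ)) σ₀ :=
          (𝒮.continuous_inv.continuousAt.comp hP).prodMk continuousAt_id
        have hmem : ((𝒮.inv (C.P (ρ σ₀)), σ₀) : S × S)
            ∈ {p : S × S | 𝒮.src p.1 = 𝒮.rng p.2} := hcomp𝒮 σ₀ hσ₀Ω
        have hmaps : Set.MapsTo (fun σ => (𝒮.inv (C.P (ρ σ)), σ)) Ω
            {p : S × S | 𝒮.src p.1 = 𝒮.rng p.2} := fun σ hσ => hcomp𝒮 σ hσ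
        have hcw := ContinuousWithinAt.comp
          (g := fun p : S × S => 𝒮.mul p.1 p.2)
          (f := fun σ => (𝒮.inv (C.P (ρ σ)), σ))
          (𝒮.continuousOn_mul.continuousWithinAt hmem)
          hpair.continuousWithinAt hmaps
        exact hcw.continuousAt (hΩopen.mem_nhds hσ₀Ω)
      obtain ⟨O, hOopen, hOm, hOconst⟩ := hf.1.exists_open (m σ₀)
      obtain ⟨N, hNsub, hNopen, hNmem⟩ :=
        mem_nhds_iff.1 (hmcont.preimage_mem_nhds (hOopen.mem_nhds hOm))
      refine ⟨N ∩ Ω, hNopen.inter hΩopen, ⟨hNmem, hσ₀Ω⟩, ?_⟩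
      rintro σ ⟨hσN, hσΩ⟩
      rw [T.conv_chi_apply_P hf.2.1 (hρ σ hσΩ).1 (hρ σ hσΩ).2,
        T.conv_chi_apply_P hf.2.1 (hρ σ₀ hσ₀Ω).1 (hρ σ₀ hσ₀Ω).2]
      rw [show f (𝒮.mul (𝒮.inv (C.P (ρ σ))) σ) = f (m σ) from rfl,
        show f (𝒮.mul (𝒮.inv (C.P (ρ σ₀))) σ₀) = f (m σ₀) from rfl]
      rw [hOconst (m σ) (hNsub hσN), hOconst (m σ₀) hOm]
    · push_neg at h0
      have hBr : IsCompact (𝒢.rng '' C.B) := C.cptB.image 𝒢.continuous_rng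
      refine ⟨(fun σ => 𝒢.rng (T.q σ)) ⁻¹' (𝒢.rng '' C.B)ᶜ,
        (hBr.isClosed.isOpen_compl).preimage hcont_rq, ?_, ?_⟩
      · rintro ⟨β, hβ, hb⟩
        exact h0 β hβ hb
      · intro σ' hσ'
        have h0' : ∀ β ∈ C.B, 𝒢.rng β ≠ 𝒢.rng (T.q σ') := by
          intro β hβ hb
          exact hσ' ⟨β, hβ, hb⟩
        rw [T.conv_chi_apply_zero C f σ' h0',
          T.conv_chi_apply_zero C f σ₀ (fun β hβ hb => h0 β hβ hb)]
  exact T.memA_of_parts hlc (T.conv_chi_contra hf.2.1)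
    (𝒢.setMul_compact C.cptB hf.2.2) (T.conv_chi_supp_subset hf)

lemma conv_chi_unit_val {C : T.Chart} {f : S → R} (hf : T.Ctr f)
    (hu : C.B ⊆ 𝒢.unitSpace) {σ : S} (h : 𝒢.rng (T.q σ) ∈ C.B) :
    ∃ t : Rˣ, T.conv (T.chi C) f σ = (t : R) * f σ := by
  have hr : 𝒢.rng (𝒢.rng (T.q σ)) = 𝒢.rng (T.q σ) := 𝒢.rng_rng _
  have happ := T.conv_chi_apply_P hf h hr
  have hq1 : T.q (𝒮.mul (𝒮.inv (C.P (𝒢.rng (T.q σ)))) σ) = T.q σ := by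
    have hc : 𝒮.src (𝒮.inv (C.P (𝒢.rng (T.q σ)))) = 𝒮.rng σ :=
      T.compS_of (by rw [C.sect _ h]; exact hr)
    rw [T.q_mul _ _ hc, T.q_inv, C.sect _ h,
      𝒢.inv_unit (hu h), 𝒢.rng_mul_self]
  obtain ⟨s, hs⟩ := T.exists_act_of_q_eq hq1
  refine ⟨s⁻¹, ?_⟩
  rw [happ, hs, hf]

lemma conv_chi_unit_supp {C : T.Chart} {f : S → R} (hf : T.Ctr f)
    (hu : C.B ⊆ 𝒢.unitSpace) {σ : S}
    (hσ : T.conv (T.chi C) f σ ≠ 0) : 𝒢.rng (T.q σ) ∈ C.B ∧ f σ ≠ 0 := by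
  have h0 : ∃ β ∈ C.B, 𝒢.rng β = 𝒢.rng (T.q σ) := by
    by_contra h
    push_neg at h
    exact hσ (T.conv_chi_apply_zero C f σ h)
  obtain ⟨β, hβ, hr⟩ := h0
  have hβu : β = 𝒢.rng (T.q σ) := by rw [← hr, 𝒢.rng_unit (hu hβ)]
  have hB : 𝒢.rng (T.q σ) ∈ C.B := hβu ▸ hβ
  obtain ⟨t, ht⟩ := T.conv_chi_unit_val hf hu hB
  refine ⟨hB, fun hfz => hσ ?_⟩
  rw [ht, hfz, mul_zero]

end DiscreteTwist
end
noncomputable section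
set_option linter.unusedSectionVars false
set_option linter.unusedVariables false
set_option maxHeartbeats 1000000

namespace DiscreteTwist

variable {R : Type w} [CommRing R] {G : Type u} {S : Type v}
  [TopologicalSpace G] [TopologicalSpace S] [T2Space G] [T2Space S]
  {𝒢 : AmpleGroupoid G} {𝒮 : EtaleGroupoid S} (T : DiscreteTwist R 𝒢 𝒮)
  [Nontrivial R]

/-- If `rng α = rng (q σ)` and `inv α · q σ` is a unit, it equals `src (q σ)`
and `α = q σ`. -/
lemma unit_quotient {α : G} {σ : S} (hr : 𝒢.rng α = 𝒢.rng (T.q σ))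
    (hu : 𝒢.mul (𝒢.inv α) (T.q σ) ∈ 𝒢.unitSpace) :
    α = T.q σ ∧ 𝒢.mul (𝒢.inv α) (T.q σ) = 𝒢.src (T.q σ) := by
  have hcomp : 𝒢.src (𝒢.inv α) = 𝒢.rng (T.q σ) := by rw [𝒢.src_inv]; exact hr
  set δ := 𝒢.mul (𝒢.inv α) (T.q σ) with hδ
  have h1 : 𝒢.src δ = 𝒢.src (T.q σ) := 𝒢.src_mul _ _ hcomp
  have h2 : 𝒢.rng δ = 𝒢.src α := by rw [hδ, 𝒢.rng_mul _ _ hcomp, 𝒢.rng_inv]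
  have h3 : δ = 𝒢.src (T.q σ) := by rw [← h1, 𝒢.src_unit hu]
  have h4 : δ = 𝒢.src α := by rw [← h2, 𝒢.rng_unit hu]
  have h5 : α = T.q σ := by
    have := 𝒢.mul_inv_cancel_left hr
    rw [← hδ, h4, 𝒢.mul_src_self] at this
    exact this
  exact ⟨h5, h3⟩

lemma conv_right_zero {C : T.Chart} (hu : C.B ⊆ 𝒢.unitSpace) (f : S → R) {σ : S}
    (h : 𝒢.src (T.q σ) ∉ C.B) : T.conv f (T.chi C) σ = 0 := by
  simp only [DiscreteTwist.conv]
  apply finsum_eq_zero_of_forall_eq_zero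
  intro α
  by_cases hr : 𝒢.rng α = 𝒢.rng (T.q σ)
  · rw [if_pos hr]
    have hB : T.q (𝒮.mul (𝒮.inv (T.sec α)) σ) ∉ C.B := by
      rw [T.q_mul_inv_sec hr]
      intro hB
      exact h ((T.unit_quotient hr (hu hB)).2 ▸ hB)
    rw [T.chi_eq_zero hB, mul_zero]
  · rw [if_neg hr]

lemma conv_right_apply {C : T.Chart} (hu : C.B ⊆ 𝒢.unitSpace) (f : S → R) {σ : S}
    (h : 𝒢.src (T.q σ) ∈ C.B) :
    T.conv f (T.chi C) σ
      = f (T.sec (T.q σ)) * T.chi C (𝒮.mul (𝒮.inv (T.sec (T.q σ))) σ) := by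
  simp only [DiscreteTwist.conv]
  rw [finsum_eq_single _ (T.q σ) ?_, if_pos (rfl : 𝒢.rng (T.q σ) = 𝒢.rng (T.q σ))]
  intro α hne
  by_cases hr : 𝒢.rng α = 𝒢.rng (T.q σ)
  · rw [if_pos hr]
    have hB : T.q (𝒮.mul (𝒮.inv (T.sec α)) σ) ∉ C.B := by
      rw [T.q_mul_inv_sec hr]
      intro hB
      exact hne (T.unit_quotient hr (hu hB)).1
    rw [T.chi_eq_zero hB, mul_zero]
  · rw [if_neg hr]

lemma conv_right_val {C : T.Chart} (hu : C.B ⊆ 𝒢.unitSpace) {f : S → R}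
    (hf : T.Ctr f) {σ : S} (h : 𝒢.src (T.q σ) ∈ C.B) :
    ∃ t : Rˣ, T.conv f (T.chi C) σ = (t : R) * f σ := by
  rw [T.conv_right_apply hu f h]
  obtain ⟨s, hs⟩ := T.exists_act_of_q_eq (T.q_sec (T.q σ))
  have hq1 : T.q (𝒮.mul (𝒮.inv (T.sec (T.q σ))) σ) ∈ C.B := by
    rw [T.q_mul_inv_sec (rfl : 𝒢.rng (T.q σ) = 𝒢.rng (T.q σ)), 𝒢.inv_mul_self]
    exact h
  obtain ⟨u, -, huval⟩ := T.chi_spec hq1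
  refine ⟨s⁻¹ * u⁻¹, ?_⟩
  rw [huval, hs, hf, Units.val_mul]
  ring

lemma conv_right_supp {C : T.Chart} (hu : C.B ⊆ 𝒢.unitSpace) {f : S → R}
    (hf : T.Ctr f) {σ : S} (hσ : T.conv f (T.chi C) σ ≠ 0) :
    𝒢.src (T.q σ) ∈ C.B ∧ f σ ≠ 0 := by
  by_cases h : 𝒢.src (T.q σ) ∈ C.B
  · obtain ⟨t, ht⟩ := T.conv_right_val hu hf h
    exact ⟨h, fun hz => hσ (by rw [ht, hz, mul_zero])⟩
  · exact absurd (T.conv_right_zero hu f h) hσ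

lemma conv_right_contra {C : T.Chart} (hu : C.B ⊆ 𝒢.unitSpace) {f : S → R}
    (hf : T.Ctr f) : T.Ctr (T.conv f (T.chi C)) := by
  intro t σ
  have hq : T.q (T.act t σ) = T.q σ := T.q_act t σ
  by_cases h : 𝒢.src (T.q σ) ∈ C.B
  · have h' : 𝒢.src (T.q (T.act t σ)) ∈ C.B := by rw [hq]; exact h
    rw [T.conv_right_apply hu f h', T.conv_right_apply hu f h, hq]
    have hmv : 𝒮.mul (𝒮.inv (T.sec (T.q σ))) (T.act t σ)
        = T.act t (𝒮.mul (𝒮.inv (T.sec (T.q σ))) σ) :=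
      T.act_mul_right t (by rw [T.q_inv, T.q_sec, 𝒢.src_inv])
    rw [hmv, T.chi_contra]
    ring
  · have h' : 𝒢.src (T.q (T.act t σ)) ∉ C.B := by rw [hq]; exact h
    rw [T.conv_right_zero hu f h', T.conv_right_zero hu f h, mul_zero]

lemma memA_conv_right {C : T.Chart} (hu : C.B ⊆ 𝒢.unitSpace) {f : S → R}
    (hf : T.MemA f) : T.MemA (T.conv f (T.chi C)) := by
  have hBclosed : IsClosed C.B := C.cptB.isClosed
  have hlc : IsLocallyConstant (T.conv f (T.chi C)) := by
    rw [IsLocallyConstant.iff_exists_open]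
    intro σ₀
    by_cases h : 𝒢.src (T.q σ₀) ∈ C.B
    · obtain ⟨C₂, hqB₂, -⟩ := T.exists_chart (T.q σ₀) isOpen_univ trivial
      set Ω : Set S := T.q ⁻¹' C₂.B ∩ (fun σ => 𝒢.src (T.q σ)) ⁻¹' C.B with hΩdef
      have hΩopen : IsOpen Ω :=
        (C₂.openB.preimage T.continuous_q).inter
          (C.openB.preimage (𝒢.continuous_src.comp T.continuous_q))
      have hσ₀Ω : σ₀ ∈ Ω := ⟨hqB₂, h⟩
      have hform : ∀ σ ∈ Ω, T.conv f (T.chi C) σ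
          = f (C₂.P (T.q σ)) * T.chi C (𝒮.mul (𝒮.inv (C₂.P (T.q σ))) σ) := by
        rintro σ ⟨hσ₂, hσB⟩
        rw [T.conv_right_apply hu f hσB]
        exact T.lift_indep (τ := T.sec (T.q σ)) (τ' := C₂.P (T.q σ)) (σ := σ)
          hf.2.1 (T.chi_contra C)
          (by rw [T.q_sec, C₂.sect _ hσ₂])
          (by rw [C₂.sect _ hσ₂])
      set m : S → S := fun σ => 𝒮.mul (𝒮.inv (C₂.P (T.q σ))) σ with hmdef
      have hcomp𝒮 : ∀ σ ∈ Ω, 𝒮.src (𝒮.inv (C₂.P (T.q σ))) = 𝒮.rng σ := by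
        rintro σ ⟨hσ₂, -⟩
        rw [𝒮.src_inv, T.rngS_P hσ₂, ← T.rngS]
      have hPc : ContinuousAt (fun σ => C₂.P (T.q σ)) σ₀ :=
        (C₂.contP.continuousAt (C₂.openB.mem_nhds hqB₂)).comp
          T.continuous_q.continuousAt
      have hmcont : ContinuousAt m σ₀ := by
        have hpair : ContinuousAt (fun σ => (𝒮.inv (C₂.P (T.q σ)), σ)) σ₀ :=
          (𝒮.continuous_inv.continuousAt.comp hPc).prodMk continuousAt_id
        have hmem : ((𝒮.inv (C₂.P (T.q σ₀)), σ₀) : S × S)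
            ∈ {p : S × S | 𝒮.src p.1 = 𝒮.rng p.2} := hcomp𝒮 σ₀ hσ₀Ω
        have hmaps : Set.MapsTo (fun σ => (𝒮.inv (C₂.P (T.q σ)), σ)) Ω
            {p : S × S | 𝒮.src p.1 = 𝒮.rng p.2} := fun σ hσ => hcomp𝒮 σ hσ
        have hcw := ContinuousWithinAt.comp
          (g := fun p : S × S => 𝒮.mul p.1 p.2)
          (f := fun σ => (𝒮.inv (C₂.P (T.q σ)), σ))
          (𝒮.continuousOn_mul.continuousWithinAt hmem)
          hpair.continuousWithinAt hmaps
        exact hcw.continuousAt (hΩopen.mem_nhds hσ₀Ω)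
      obtain ⟨O1, hO1open, hO1m, hO1c⟩ := hf.1.exists_open (C₂.P (T.q σ₀))
      obtain ⟨O2, hO2open, hO2m, hO2c⟩ := (T.memA_chi C).1.exists_open (m σ₀)
      obtain ⟨N1, hN1sub, hN1open, hN1mem⟩ :=
        mem_nhds_iff.1 (hPc.preimage_mem_nhds (hO1open.mem_nhds hO1m))
      obtain ⟨N2, hN2sub, hN2open, hN2mem⟩ :=
        mem_nhds_iff.1 (hmcont.preimage_mem_nhds (hO2open.mem_nhds hO2m))
      refine ⟨N1 ∩ N2 ∩ Ω, (hN1open.inter hN2open).inter hΩopen,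
        ⟨⟨hN1mem, hN2mem⟩, hσ₀Ω⟩, ?_⟩
      rintro σ ⟨⟨hσN1, hσN2⟩, hσΩ⟩
      rw [hform σ hσΩ, hform σ₀ hσ₀Ω,
        hO1c _ (hN1sub hσN1), hO1c _ hO1m,
        hO2c _ (hN2sub hσN2), hO2c _ hO2m]
    · refine ⟨(fun σ => 𝒢.src (T.q σ)) ⁻¹' C.Bᶜ,
        (hBclosed.isOpen_compl).preimage (𝒢.continuous_src.comp T.continuous_q),
        h, ?_⟩
      intro σ' hσ'
      rw [T.conv_right_zero hu f hσ', T.conv_right_zero hu f h]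
  refine T.memA_of_parts hlc (T.conv_right_contra hu hf.2.1)
    (K := T.q '' Function.support f ∩ 𝒢.src ⁻¹' C.B)
    (hf.2.2.inter_right (hBclosed.preimage 𝒢.continuous_src)) ?_
  rintro α ⟨σ, hσ, rfl⟩
  obtain ⟨hB, hne⟩ := T.conv_right_supp hu hf.2.1 hσ
  exact ⟨⟨σ, hne, rfl⟩, hB⟩

end DiscreteTwist
end
noncomputable section
set_option linter.unusedSectionVars false
set_option linter.unusedVariables false
set_option maxHeartbeats 1000000

namespace DiscreteTwist

variable {R : Type w} [CommRing R] {G : Type u} {S : Type v}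
  [TopologicalSpace G] [TopologicalSpace S] [T2Space G] [T2Space S]
  {𝒢 : AmpleGroupoid G} {𝒮 : EtaleGroupoid S} (T : DiscreteTwist R 𝒢 𝒮)

lemma act_continuous (t : Rˣ) : Continuous (T.act t) := by
  have c1 : Continuous fun σ : S => 𝒢.rng (T.q σ) :=
    𝒢.continuous_rng.comp T.continuous_q
  have c2 : Continuous fun σ : S => T.i (𝒢.rng (T.q σ)) t := by
    have := (T.continuousOn_i t).comp_continuous c1 fun σ => 𝒢.rng_mem_unitSpace _
    simpa [Function.comp_def] using this
  have c3 : Continuous fun σ : S => ((T.i (𝒢.rng (T.q σ)) t, σ) : S × S) :=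
    c2.prodMk continuous_id
  have c4 := ContinuousOn.comp_continuous
    (g := fun p : S × S => 𝒮.mul p.1 p.2)
    (f := fun σ : S => ((T.i (𝒢.rng (T.q σ)) t, σ) : S × S))
    𝒮.continuousOn_mul c3 (fun σ => T.comp_i_act σ t)
  exact c4

lemma act_image_eq (t : Rˣ) (U : Set S) : T.act t '' U = T.act t⁻¹ ⁻¹' U := by
  ext σ
  constructor
  · rintro ⟨σ', hσ', rfl⟩
    rw [Set.mem_preimage, T.act_cancel']
    exact hσ'
  · intro h
    exact ⟨T.act t⁻¹ σ, h, T.act_cancel t σ⟩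

lemma isOpenMap_act (t : Rˣ) : IsOpenMap (T.act t) := fun U hU => by
  rw [T.act_image_eq]
  exact hU.preimage (T.act_continuous t⁻¹)

lemma actInv_interior {J : Set S} (hJ : T.ActInv J) : T.ActInv (interior J) := by
  intro t σ hσ
  have h1 : T.act t '' interior J ⊆ interior J :=
    interior_maximal (fun τ ⟨τ', hτ', hτeq⟩ => hτeq ▸ hJ t τ' (interior_subset hτ'))
      (T.isOpenMap_act t _ isOpen_interior)
  exact h1 ⟨σ, hσ, rfl⟩

end DiscreteTwist
end
noncomputable section
set_option linter.unusedSectionVars false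
set_option linter.unusedVariables false
set_option maxHeartbeats 1000000

namespace DiscreteTwist

variable {R : Type w} [CommRing R] {G : Type u} {S : Type v}
  [TopologicalSpace G] [TopologicalSpace S] [T2Space G] [T2Space S]
  {𝒢 : AmpleGroupoid G} {𝒮 : EtaleGroupoid S} (T : DiscreteTwist R 𝒢 𝒮)
  [Nontrivial R]

lemma exists_localized {Γ : Type*} [Group Γ] (cG : G → Γ) (cS : S → Γ)
    (hcG : 𝒢.IsGrading cG) (hcomm : ∀ σ : S, cS σ = cG (T.q σ))
    (hdense : 𝒮.unitSpace ⊆ closure {u ∈ 𝒮.unitSpace |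
      𝒮.isoAt u ∩ cS ⁻¹' {1} ⊆ interior (𝒮.iso ∩ cS ⁻¹' {1})})
    {γ₀ : Γ} {a : S → R} (ha : T.MemA a)
    (hgr : T.q '' Function.support a ⊆ cG ⁻¹' {γ₀}) (hane : a ≠ 0) :
    ∃ e₁ e₂ g' w h' : S → R,
      T.MemA e₁ ∧ T.MemA e₂ ∧ T.MemA g' ∧ T.MemA w ∧ T.MemA h' ∧
      g' = T.conv e₁ a ∧ w = T.conv e₂ g' ∧ h' = T.conv w e₂ ∧
      h' ≠ 0 ∧ Function.support h' ⊆ interior (𝒮.iso ∩ cS ⁻¹' {1}) := by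
  set I : Set S := interior (𝒮.iso ∩ cS ⁻¹' {1}) with hIdef
  -- a nonvanishing point
  obtain ⟨σ₀, hσ₀⟩ := Function.ne_iff.1 hane
  set α₀ := T.q σ₀ with hα₀def
  have hα₀gr : cG α₀ = γ₀ := hgr ⟨σ₀, hσ₀, rfl⟩
  -- chart C₁ at α₀⁻¹ of degree γ₀⁻¹
  have hinvgr : cG (𝒢.inv α₀) = γ₀⁻¹ := by rw [𝒢.grading_inv hcG, hα₀gr]
  obtain ⟨C₁, hβ₁, hC₁sub⟩ := T.exists_chart (𝒢.inv α₀)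
    (hcG.1.isOpen_fiber γ₀⁻¹) hinvgr
  set g' := T.conv (T.chi C₁) a with hg'def
  have hg'memA : T.MemA g' := T.memA_conv_chi ha
  -- grading of g'
  have hg'gr : T.q '' Function.support g' ⊆ cG ⁻¹' {1} := by
    intro α hα
    obtain ⟨β, hβ, δ, hδ, hcomp, rfl⟩ := T.conv_chi_supp_subset ha hα
    have h1 : cG β = γ₀⁻¹ := hC₁sub hβ
    have h2 : cG δ = γ₀ := hgr hδ
    simp only [Set.mem_preimage, Set.mem_singleton_iff]
    rw [hcG.2 β δ hcomp, h1, h2, inv_mul_cancel]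
  -- g' is nonzero at a point over a unit
  have hcompβ : 𝒢.src (𝒢.inv α₀) = 𝒢.rng (T.q σ₀) := by rw [𝒢.src_inv]
  set τ := 𝒮.mul (C₁.P (𝒢.inv α₀)) σ₀ with hτdef
  have hg'τ : g' τ = a σ₀ := T.conv_chi_translate ha.2.1 hβ₁ hcompβ
  have hS₁ : 𝒮.src (C₁.P (𝒢.inv α₀)) = 𝒮.rng σ₀ := T.srcS_P_eq_rngS hβ₁ hcompβ
  have hqτ : T.q τ = 𝒢.src α₀ := by
    rw [hτdef, T.q_mul _ _ hS₁, C₁.sect _ hβ₁, 𝒢.inv_mul_self]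
  set u₁ := T.i (𝒢.src α₀) 1 with hu₁def
  have hu₁unit : u₁ ∈ 𝒮.unitSpace := T.i_one_mem_unit (𝒢.src_mem_unitSpace α₀)
  have hqu₁ : T.q u₁ = 𝒢.src α₀ := T.q_i (𝒢.src_mem_unitSpace α₀) 1
  obtain ⟨s, hs⟩ := T.exists_act_of_q_eq (hqu₁.trans hqτ.symm)
  have hg'u₁ : g' u₁ ≠ 0 := by
    rw [hs, hg'memA.2.1, hg'τ]
    simp only [ne_eq, Units.mul_right_eq_zero]
    exact hσ₀
  -- density
  have hOopen : IsOpen (Function.support g' ∩ 𝒮.unitSpace) :=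
    (T.memA_supp_clopen hg'memA).2.inter 𝒮.isOpen_unitSpace
  have hu₁O : u₁ ∈ Function.support g' ∩ 𝒮.unitSpace := ⟨hg'u₁, hu₁unit⟩
  obtain ⟨u, huO, huD⟩ :=
    mem_closure_iff.1 (hdense hu₁unit) _ hOopen hu₁O
  have hgune : g' u ≠ 0 := huO.1
  have huunit' : u ∈ 𝒮.unitSpace := huO.2
  set x := T.q u with hxdef
  have hx : x ∈ 𝒢.unitSpace := T.q_mem_unit huunit'
  have huix : u = T.i x 1 := T.unit_eq_i huunit'
  -- the bad set W and its image M
  set W := Function.support g' \ I with hWdef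
  have hJinv : T.ActInv (𝒮.iso ∩ cS ⁻¹' {1}) := by
    rintro t σ ⟨hiso, hcs⟩
    constructor
    · show 𝒮.rng (T.act t σ) = 𝒮.src (T.act t σ)
      rw [T.rngS_act, T.srcS_act]
      exact hiso
    · show cS (T.act t σ) ∈ ({1} : Set Γ)
      rw [hcomm, T.q_act, ← hcomm]
      exact hcs
  have hIinv : T.ActInv I := T.actInv_interior hJinv
  have hWinv : T.ActInv W := by
    rintro t σ ⟨h1, h2⟩
    exact ⟨T.memA_supp_inv hg'memA t σ h1,
      fun hc => h2 (by have := hIinv t⁻¹ _ hc; rwa [T.act_cancel'] at this)⟩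
  have hWclosed : IsClosed W :=
    (T.memA_supp_clopen hg'memA).1.inter isOpen_interior.isClosed_compl
  set M := T.q '' W with hMdef
  have hMclosed : IsClosed M := T.isClosed_q_image hWinv hWclosed
  have hMcpt : IsCompact M :=
    IsCompact.of_isClosed_subset hg'memA.2.2 hMclosed
      (Set.image_mono Set.diff_subset)
  -- no element of M has both endpoints x
  have hMx : ∀ α ∈ M, ¬(𝒢.rng α = x ∧ 𝒢.src α = x) := by
    rintro α ⟨σw, hσw, rfl⟩ ⟨hr, hsx⟩
    have hrngS : 𝒮.rng σw = u := by rw [T.rngS, hr, ← huix]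
    have hsrcS : 𝒮.src σw = u := by rw [T.srcS, hsx, ← huix]
    have hcs : cS σw = 1 := by
      have := hg'gr ⟨σw, hσw.1, rfl⟩
      rw [hcomm]
      simpa using this
    have : σw ∈ I := huD.2 ⟨⟨hrngS, hsrcS⟩, hcs⟩
    exact hσw.2 this
  -- separation
  have hsep : ∀ α ∈ M, ∃ Uα Vα : Set G, IsOpen Uα ∧ IsOpen Vα ∧ α ∈ Uα ∧ x ∈ Vα ∧
      ∀ β ∈ Uα, ¬(𝒢.rng β ∈ Vα ∧ 𝒢.src β ∈ Vα) := by
    intro α hα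
    rcases not_and_or.1 (hMx α hα) with hne | hne
    · obtain ⟨A, V, hAop, hVop, hmA, hmV, hdisj⟩ := t2_separation hne
      refine ⟨𝒢.rng ⁻¹' A, V, hAop.preimage 𝒢.continuous_rng, hVop, hmA, hmV, ?_⟩
      rintro β hβ ⟨h1, -⟩
      exact Set.disjoint_left.1 hdisj hβ h1
    · obtain ⟨A, V, hAop, hVop, hmA, hmV, hdisj⟩ := t2_separation hne
      refine ⟨𝒢.src ⁻¹' A, V, hAop.preimage 𝒢.continuous_src, hVop, hmA, hmV, ?_⟩
      rintro β hβ ⟨-, h2⟩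
      exact Set.disjoint_left.1 hdisj hβ h2
  choose Uf Vf hUo hVo hUm hVm hprop using hsep
  obtain ⟨t, ht⟩ := hMcpt.elim_finite_subcover (fun i : ↥M => Uf i.1 i.2)
    (fun i => hUo i.1 i.2) (fun α hα => Set.mem_iUnion.2 ⟨⟨α, hα⟩, hUm α hα⟩)
  set Y := 𝒢.unitSpace ∩ ⋂ i ∈ t, Vf i.1 i.2 with hYdef
  have hYopen : IsOpen Y :=
    𝒢.isOpen_unitSpace.inter (isOpen_biInter_finset fun i _ => hVo i.1 i.2)
  have hxY : x ∈ Y := ⟨hx, Set.mem_biInter fun i _ => hVm i.1 i.2⟩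
  obtain ⟨C₂, hxB, hC₂sub⟩ := T.exists_chart x hYopen hxY
  have hu2 : C₂.B ⊆ 𝒢.unitSpace := fun β hβ => (hC₂sub hβ).1
  have hVprop : ∀ α ∈ M, ¬(𝒢.rng α ∈ C₂.B ∧ 𝒢.src α ∈ C₂.B) := by
    rintro α hα ⟨h1, h2⟩
    obtain ⟨i, hit, hαU⟩ := Set.mem_iUnion₂.1 (ht hα)
    have hsubV : C₂.B ⊆ Vf i.1 i.2 := fun β hβ =>
      Set.mem_iInter₂.1 (hC₂sub hβ).2 i hit
    exact hprop i.1 i.2 α hαU ⟨hsubV h1, hsubV h2⟩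
  -- final construction
  set w := T.conv (T.chi C₂) g' with hwdef
  have hwmemA : T.MemA w := T.memA_conv_chi hg'memA
  set h' := T.conv w (T.chi C₂) with hh'def
  have hh'memA : T.MemA h' := T.memA_conv_right hu2 hwmemA
  have hsrcu : 𝒢.src (T.q u) ∈ C₂.B := by
    rw [← hxdef, 𝒢.src_unit hx]; exact hxB
  have hrngu : 𝒢.rng (T.q u) ∈ C₂.B := by
    rw [← hxdef, 𝒢.rng_unit hx]; exact hxB
  obtain ⟨t₂, ht₂⟩ := T.conv_right_val hu2 hwmemA.2.1 hsrcu
  obtain ⟨t₃, ht₃⟩ := T.conv_chi_unit_val hg'memA.2.1 hu2 hrngu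
  have hh'u : h' u ≠ 0 := by
    have hval : h' u = (t₂ : R) * ((t₃ : R) * g' u) := by
      rw [hh'def]
      rw [ht₂, hwdef, ht₃]
    rw [hval]
    simp only [ne_eq, Units.mul_right_eq_zero]
    exact hgune
  have hh'ne : h' ≠ 0 := fun hz => hh'u (by rw [hz]; rfl)
  have hsupp : Function.support h' ⊆ I := by
    intro σ hσ
    obtain ⟨hsB, hwne⟩ := T.conv_right_supp hu2 hwmemA.2.1 hσ
    obtain ⟨hrB, hg'ne⟩ := T.conv_chi_unit_supp hg'memA.2.1 hu2 hwne
    by_contra hσI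
    exact hVprop (T.q σ) ⟨σ, ⟨hg'ne, hσI⟩, rfl⟩ ⟨hrB, hsB⟩
  exact ⟨T.chi C₁, T.chi C₂, g', w, h', T.memA_chi C₁, T.memA_chi C₂, hg'memA,
    hwmemA, hh'memA, hg'def, hwdef, hh'def, hh'ne, hsupp⟩

end DiscreteTwist
end
set_option maxHeartbeats 1000000 in
/-- Generalised Graded Uniqueness Theorem: for a `Γ`-graded
discrete `R`-twist with `{u ∈ Σ_ε⁽⁰⁾ : (Σ_ε)ᵤᵘ ⊆ Iso(Σ_ε)°}` dense in `Σ⁽⁰⁾`,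
a graded ring homomorphism `π : A_R(G;Σ) → Q` into a `Γ`-graded ring `Q` is
injective iff it is nonzero on every nonzero element of
`A_R(Iso(G_ε)°; Iso(Σ_ε)°)`, i.e. every nonzero `f ∈ A_R(G;Σ)` supported in
`Iso(Σ_ε)°`. -/
theorem stmt_14 {R : Type*} [CommRing R] {G S : Type*}
    [TopologicalSpace G] [TopologicalSpace S] [T2Space G] [T2Space S]
    {𝒢 : AmpleGroupoid G} {𝒮 : EtaleGroupoid S} (T : DiscreteTwist R 𝒢 𝒮)
    {Γ : Type*} [Group Γ]
    (cG : G → Γ) (cS : S → Γ)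
    (hcG : 𝒢.IsGrading cG) (hcS : 𝒮.IsGrading cS)
    (hcomm : ∀ σ : S, cS σ = cG (T.q σ))
    (hdense : 𝒮.unitSpace ⊆ closure {u ∈ 𝒮.unitSpace |
      𝒮.isoAt u ∩ cS ⁻¹' {1} ⊆ interior (𝒮.iso ∩ cS ⁻¹' {1})})
    {Q : Type*} [Ring Q] (gr : Γ → AddSubgroup Q)
    (hgrmul : ∀ γ δ : Γ, ∀ x ∈ gr γ, ∀ y ∈ gr δ, x * y ∈ gr (γ * δ))
    (hindep : ∀ (F : Finset Γ) (x : Γ → Q), (∀ γ ∈ F, x γ ∈ gr γ) →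
      (∑ γ ∈ F, x γ) = 0 → ∀ γ ∈ F, x γ = 0)
    (π : (S → R) → Q)
    (hzero : π 0 = 0)
    (hadd : ∀ f g, T.MemA f → T.MemA g → π (f + g) = π f + π g)
    (hmul : ∀ f g, T.MemA f → T.MemA g → π (T.conv f g) = π f * π g)
    (hgraded : ∀ (γ : Γ) (f : S → R), T.MemA f →
      T.q '' Function.support f ⊆ cG ⁻¹' {γ} → π f ∈ gr γ) :
    Set.InjOn π {f | T.MemA f} ↔
      ∀ f : S → R, T.MemA f →
        Function.support f ⊆ interior (𝒮.iso ∩ cS ⁻¹' {1}) →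
        f ≠ 0 → π f ≠ 0 := by
  constructor
  · intro hinj f hf hsupp hfne hπ
    exact hfne (hinj hf T.memA_zero (by rw [hπ, hzero]))
  · intro hker
    rcases subsingleton_or_nontrivial R with hR | hR
    · intro f hf g hg hfg
      funext σ
      exact Subsingleton.elim _ _
    · have hπneg : ∀ g : S → R, T.MemA g → π (-g) = -π g := by
        intro g hg
        have h1 := hadd g (-g) hg (T.memA_neg hg)
        rw [show g + -g = (0 : S → R) from by funext σ; simp, hzero] at h1
        exact (neg_eq_of_add_eq_zero_right h1.symm).symm
      have hker0 : ∀ h : S → R, T.MemA h → π h = 0 → h = 0 := by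
        intro h hh hπh
        by_contra hne0
        have hFfin : (cG '' (T.q '' Function.support h)).Finite :=
          LocConst.finite_image hcG.1 hh.2.2
        set F := hFfin.toFinset with hFdef
        set hc : Γ → S → R := fun γ σ => if T.q σ ∈ cG ⁻¹' {γ} then h σ else 0
          with hcdef
        have hmemγ : ∀ γ, T.MemA (hc γ) := fun γ =>
          T.memA_restrict hh (hcG.1.isClopen_fiber γ)
        have hgrγ : ∀ γ, T.q '' Function.support (hc γ) ⊆ cG ⁻¹' {γ} := by
          rintro γ α ⟨σ, hσ, rfl⟩
          rw [Function.mem_support, hcdef] at hσ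
          by_cases hmem : T.q σ ∈ cG ⁻¹' {γ}
          · exact hmem
          · simp [hmem] at hσ
        have hdecomp : h = ∑ γ ∈ F, hc γ := by
          funext σ
          rw [Finset.sum_apply]
          by_cases hσ : h σ = 0
          · rw [hσ]
            refine (Finset.sum_eq_zero ?_).symm
            intro γ _
            by_cases hmem : T.q σ ∈ cG ⁻¹' {γ} <;> simp [hcdef, hmem, hσ]
          · have hγF : cG (T.q σ) ∈ F := by
              rw [hFdef, Set.Finite.mem_toFinset]
              exact ⟨T.q σ, ⟨σ, hσ, rfl⟩, rfl⟩
            rw [Finset.sum_eq_single_of_mem (cG (T.q σ)) hγF ?_]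
            · simp [hcdef]
            · intro γ _ hγne
              have hnm : ¬ cG (T.q σ) = γ := fun hm => hγne hm.symm
              simp [hcdef, hnm]
        have hsums : ∀ L : Finset Γ, T.MemA (∑ γ ∈ L, hc γ) ∧
            π (∑ γ ∈ L, hc γ) = ∑ γ ∈ L, π (hc γ) := by
          intro L
          classical
          refine Finset.induction_on L ?_ ?_
          · simpa using ⟨T.memA_zero, hzero⟩
          · intro γ L' hγL ih
            rw [Finset.sum_insert hγL, Finset.sum_insert hγL]
            exact ⟨T.memA_add (hmemγ γ) ih.1,
              by rw [hadd _ _ (hmemγ γ) ih.1, ih.2]⟩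
        have hπγ : ∀ γ ∈ F, π (hc γ) = 0 := by
          refine hindep F (fun γ => π (hc γ)) ?_ ?_
          · intro γ _
            exact hgraded γ (hc γ) (hmemγ γ) (hgrγ γ)
          · rw [← (hsums F).2, ← hdecomp, hπh]
        obtain ⟨σ₀, hσ₀⟩ := Function.ne_iff.1 hne0
        set γ₀ := cG (T.q σ₀) with hγ₀def
        have hγ₀F : γ₀ ∈ F := by
          rw [hFdef, Set.Finite.mem_toFinset]
          exact ⟨T.q σ₀, ⟨σ₀, hσ₀, rfl⟩, rfl⟩
        have hane : hc γ₀ ≠ 0 := by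
          intro hz
          have hmem0 : T.q σ₀ ∈ cG ⁻¹' {γ₀} := by simp [hγ₀def]
          have hz' := congrFun hz σ₀
          simp only [hcdef, if_pos hmem0, Pi.zero_apply] at hz'
          exact hσ₀ hz'
        obtain ⟨e₁, e₂, g', w', h', he₁, he₂, hg'm, hwm, hh'm, hg'e, hwe, hh'e,
          hh'ne, hh'supp⟩ :=
          T.exists_localized cG cS hcG hcomm hdense (hmemγ γ₀) (hgrγ γ₀) hane
        have hπh' : π h' = 0 := by
          rw [hh'e, hmul _ _ hwm he₂, hwe, hmul _ _ he₂ hg'm, hg'e,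
            hmul _ _ he₁ (hmemγ γ₀), hπγ γ₀ hγ₀F]
          simp
        exact hker h' hh'm hh'supp hh'ne hπh'
      intro f hf g hg hfg
      have h1 : π (f + -g) = 0 := by
        rw [hadd f (-g) hf (T.memA_neg hg), hπneg g hg, hfg]
        simp
      have h2 := hker0 (f + -g) (T.memA_add hf (T.memA_neg hg)) h1
      funext σ
      have h3 := congrFun h2 σ
      simp only [Pi.add_apply, Pi.neg_apply, Pi.zero_apply] at h3
      exact eq_of_sub_eq_zero (by rw [sub_eq_add_neg]; exact h3)
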